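/- arXiv:2205.07848 — 7 statements merged into one kernel-verified Lean document; each statement's English description precedes it below -/
import Mathlib

section
/- Let U = R_Y(θ₀) · ∏_{j=1}^{L} R_Z(x) R_Y(θ_j) be a product of single-qubit rotations, where R_Z(x) = diag(e^{-ix/2}, e^{ix/2}) and R_Y(θ) = [[cos(θ/2), -sin(θ/2)], [sin(θ/2), cos(θ/2)]]. Then U has the form [[P(x), -Q(x)], [Q*(x), P*(x)]] where P and Q are Laurent polynomials in e^{ix/2} with real coefficients, deg(P) ≤ L, deg(Q) ≤ L, and both P and Q have parity L mod 2 (only powers of e^{ix/2} congruent to L mod 2 have nonzero coefficients). -/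
open Complex Matrix

noncomputable def RZ (x : ℝ) : Matrix (Fin 2) (Fin 2) ℂ :=
  !![Complex.exp (-(Complex.I * x) / 2), 0; 0, Complex.exp (Complex.I * x / 2)]

noncomputable def RY (θ : ℝ) : Matrix (Fin 2) (Fin 2) ℂ :=
  !![(Real.cos (θ / 2) : ℂ), -(Real.sin (θ / 2) : ℂ);
     (Real.sin (θ / 2) : ℂ), (Real.cos (θ / 2) : ℂ)]

lemma shift_sum (L : ℕ) (p : ℤ → ℝ) (hp : ∀ n : ℤ, (L:ℤ) < |n| → p n = 0)
    (x : ℝ) (k : ℤ) (hk : k = 1 ∨ k = -1) :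
    ∑ n ∈ Finset.Icc (-((L:ℤ)+1)) ((L:ℤ)+1),
        ((p (n + k) : ℝ) : ℂ) * Complex.exp (Complex.I * (n:ℂ) * (x:ℂ) / 2)
      = Complex.exp (Complex.I * ((-k : ℤ):ℂ) * (x:ℂ) / 2) *
        ∑ n ∈ Finset.Icc (-(L:ℤ)) (L:ℤ),
          ((p n : ℝ):ℂ) * Complex.exp (Complex.I * (n:ℂ) * (x:ℂ) / 2) := by
  have hsub : Finset.Icc (-(L:ℤ) + -k) ((L:ℤ) + -k) ⊆ Finset.Icc (-((L:ℤ)+1)) ((L:ℤ)+1) := by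
    intro n hn
    simp only [Finset.mem_Icc] at *
    omega
  rw [← Finset.sum_subset hsub (by
    intro n _ hn
    simp only [Finset.mem_Icc, not_and_or, not_le] at hn
    have : (L:ℤ) < |n + k| := by
      rw [Int.abs_eq_natAbs]
      omega
    rw [hp _ this]
    simp)]
  rw [← Finset.map_add_right_Icc, Finset.sum_map, Finset.mul_sum]
  apply Finset.sum_congr rfl
  intro m _
  simp only [addRightEmbedding_apply]
  have : m + -k + k = m := by ring
  rw [this, mul_left_comm, ← Complex.exp_add]
  congr 2
  push_cast
  ring

/-- the QNN `U = R_Y(θ₀) ∏_{j=1}^L R_Z(x) R_Y(θ_j)` has the form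
`[[P, -Q],[Q*, P*]]` where `P, Q` are real-coefficient Laurent polynomials in `e^{ix/2}`
of degree at most `L` and parity `L mod 2`. -/
theorem stmt0 (L : ℕ) (θ : Fin (L + 1) → ℝ) :
    ∃ p q : ℤ → ℝ,
      (∀ n : ℤ, (L : ℤ) < |n| → p n = 0) ∧
      (∀ n : ℤ, (L : ℤ) < |n| → q n = 0) ∧
      (∀ n : ℤ, n % 2 ≠ (L : ℤ) % 2 → p n = 0) ∧
      (∀ n : ℤ, n % 2 ≠ (L : ℤ) % 2 → q n = 0) ∧
      (∀ x : ℝ,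
        RY (θ 0) * (List.ofFn fun j : Fin L => RZ x * RY (θ j.succ)).prod =
        !![(∑ n ∈ Finset.Icc (-(L : ℤ)) (L : ℤ),
              (p n : ℂ) * Complex.exp (Complex.I * (n : ℂ) * (x : ℂ) / 2)),
           -(∑ n ∈ Finset.Icc (-(L : ℤ)) (L : ℤ),
              (q n : ℂ) * Complex.exp (Complex.I * (n : ℂ) * (x : ℂ) / 2));
           (starRingEnd ℂ) (∑ n ∈ Finset.Icc (-(L : ℤ)) (L : ℤ),
              (q n : ℂ) * Complex.exp (Complex.I * (n : ℂ) * (x : ℂ) / 2)),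
           (starRingEnd ℂ) (∑ n ∈ Finset.Icc (-(L : ℤ)) (L : ℤ),
              (p n : ℂ) * Complex.exp (Complex.I * (n : ℂ) * (x : ℂ) / 2))]) := by
  induction L with
  | zero =>
    refine ⟨fun n => if n = 0 then Real.cos (θ 0 / 2) else 0,
            fun n => if n = 0 then Real.sin (θ 0 / 2) else 0,
            ?_, ?_, ?_, ?_, ?_⟩
    · intro n hn
      have h : n ≠ 0 := by rintro rfl; simp at hn
      simp [h]
    · intro n hn
      have h : n ≠ 0 := by rintro rfl; simp at hn
      simp [h]
    · intro n hn
      have h : n ≠ 0 := by simp only [Nat.cast_zero] at hn; omega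
      simp [h]
    · intro n hn
      have h : n ≠ 0 := by simp only [Nat.cast_zero] at hn; omega
      simp [h]
    · intro x
      simp only [List.ofFn_zero, List.prod_nil, mul_one, Nat.cast_zero, neg_zero,
        Finset.Icc_self, Finset.sum_singleton, Int.cast_zero, mul_zero, zero_mul, zero_div,
        Complex.exp_zero, mul_one, if_pos rfl, RY]
      simp [← Complex.ofReal_cos, ← Complex.ofReal_sin, Complex.conj_ofReal]
  | succ L ih =>
    obtain ⟨p, q, hp, hq, hpp, hqp, hmat⟩ := ih (θ ∘ Fin.castSucc)
    refine ⟨fun n => Real.cos (θ (Fin.last (L+1)) / 2) * p (n+1)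
              - Real.sin (θ (Fin.last (L+1)) / 2) * q (n-1),
            fun n => Real.sin (θ (Fin.last (L+1)) / 2) * p (n+1)
              + Real.cos (θ (Fin.last (L+1)) / 2) * q (n-1), ?_, ?_, ?_, ?_, ?_⟩
    · intro n hn
      simp only [Int.abs_eq_natAbs] at hn
      have h1 : (L:ℤ) < |n+1| := by rw [Int.abs_eq_natAbs]; omega
      have h2 : (L:ℤ) < |n-1| := by rw [Int.abs_eq_natAbs]; omega
      simp [hp _ h1, hq _ h2]
    · intro n hn
      simp only [Int.abs_eq_natAbs] at hn
      have h1 : (L:ℤ) < |n+1| := by rw [Int.abs_eq_natAbs]; omega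
      have h2 : (L:ℤ) < |n-1| := by rw [Int.abs_eq_natAbs]; omega
      simp [hp _ h1, hq _ h2]
    · intro n hn
      push_cast at hn
      have h1 : (n+1) % 2 ≠ (L:ℤ) % 2 := by omega
      have h2 : (n-1) % 2 ≠ (L:ℤ) % 2 := by omega
      simp [hpp _ h1, hqp _ h2]
    · intro n hn
      push_cast at hn
      have h1 : (n+1) % 2 ≠ (L:ℤ) % 2 := by omega
      have h2 : (n-1) % 2 ≠ (L:ℤ) % 2 := by omega
      simp [hpp _ h1, hqp _ h2]
    · intro x
      simp only []
      set c := Real.cos (θ (Fin.last (L+1)) / 2) with hc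
      set s := Real.sin (θ (Fin.last (L+1)) / 2) with hs
      have hm := hmat x
      simp only [Function.comp] at hm
      have h1 := shift_sum L p hp x 1 (Or.inl rfl)
      have h2 := shift_sum L q hq x (-1) (Or.inr rfl)
      norm_num at h1 h2
      set A := Complex.exp (-(Complex.I * (x:ℂ)) / 2) with hA
      set B := Complex.exp (Complex.I * (x:ℂ) / 2) with hB
      set P := ∑ n ∈ Finset.Icc (-(L:ℤ)) (L:ℤ),
          ((p n : ℝ):ℂ) * Complex.exp (Complex.I * (n:ℂ) * (x:ℂ) / 2) with hP0
      set Q := ∑ n ∈ Finset.Icc (-(L:ℤ)) (L:ℤ),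
          ((q n : ℝ):ℂ) * Complex.exp (Complex.I * (n:ℂ) * (x:ℂ) / 2) with hQ0
      have hcA : (starRingEnd ℂ) A = B := by
        rw [hA, hB, ← Complex.exp_conj]
        congr 1
        simp [map_ofNat]
      have hcB : (starRingEnd ℂ) B = A := by
        rw [hA, hB, ← Complex.exp_conj]
        congr 1
        simp [map_ofNat]
      have hP : ∑ n ∈ Finset.Icc (-((L+1:ℕ):ℤ)) ((L+1:ℕ):ℤ),
            ((c * p (n+1) - s * q (n-1) : ℝ):ℂ) * Complex.exp (Complex.I * (n:ℂ) * (x:ℂ) / 2)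
          = (c:ℂ) * (A * P) - (s:ℂ) * (B * Q) := by
        rw [show (-((L+1:ℕ):ℤ)) = -1 + -(L:ℤ) by push_cast; ring,
            show ((L+1:ℕ):ℤ) = (L:ℤ)+1 by push_cast; ring_nf,
            ← h1, ← h2, Finset.mul_sum, Finset.mul_sum, ← Finset.sum_sub_distrib]
        exact Finset.sum_congr rfl fun n _ => by push_cast; ring
      have hQ : ∑ n ∈ Finset.Icc (-((L+1:ℕ):ℤ)) ((L+1:ℕ):ℤ),
            ((s * p (n+1) + c * q (n-1) : ℝ):ℂ) * Complex.exp (Complex.I * (n:ℂ) * (x:ℂ) / 2)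
          = (s:ℂ) * (A * P) + (c:ℂ) * (B * Q) := by
        rw [show (-((L+1:ℕ):ℤ)) = -1 + -(L:ℤ) by push_cast; ring,
            show ((L+1:ℕ):ℤ) = (L:ℤ)+1 by push_cast; ring_nf,
            ← h1, ← h2, Finset.mul_sum, Finset.mul_sum, ← Finset.sum_add_distrib]
        exact Finset.sum_congr rfl fun n _ => by push_cast; ring
      have hPc := congrArg (starRingEnd ℂ) hP
      have hQc := congrArg (starRingEnd ℂ) hQ
      simp only [map_sub, map_add, _root_.map_mul, Complex.conj_ofReal, hcA, hcB] at hPc hQc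
      have hlist : (List.ofFn fun j : Fin (L+1) => RZ x * RY (θ j.succ))
          = (List.ofFn fun j : Fin L => RZ x * RY (θ j.succ.castSucc))
            ++ [RZ x * RY (θ (Fin.last (L+1)))] := by
        rw [List.ofFn_succ']
        simp [Fin.succ_castSucc, -Fin.castSucc_succ]
      rw [hlist, List.prod_append, List.prod_singleton, ← mul_assoc]
      rw [show (0 : Fin (L+1+1)) = Fin.castSucc 0 from rfl, hm, ← mul_assoc]
      simp only [RZ, RY, Matrix.mul_fin_two]
      rw [← hA, ← hB, ← hc, ← hs]
      refine Matrix.ext fun i j => ?_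
      fin_cases i <;> fin_cases j <;>
        simp only [Fin.zero_eta, Fin.mk_one, Matrix.cons_val', Matrix.cons_val_zero,
          Matrix.cons_val_one, Matrix.head_cons, Matrix.empty_val', Matrix.cons_val_fin_one,
          Matrix.head_fin_const, Matrix.of_apply]
      · linear_combination -hP
      · linear_combination hQ
      · linear_combination -hQc
      · linear_combination -hPc
end

section
/- Let P, Q be Laurent polynomials in z = e^{ix/2} with real coefficients such that deg(P) ≤ L, deg(Q) ≤ L, both P and Q have parity L mod 2, and |P(x)|² + |Q(x)|² = 1 for all real x. Then there exist real angles θ₀, θ₁, ..., θ_L such that the matrix [[P(x), -Q(x)], [Q*(x), P*(x)]] equals R_Y(θ₀) · ∏_{j=1}^{L} R_Z(x) R_Y(θ_j) for all real x. -/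
open Complex Matrix

noncomputable def ee (n : ℤ) (x : ℝ) : ℂ := Complex.exp (Complex.I * (n : ℂ) * (x : ℂ) / 2)

lemma ee_mul (n m : ℤ) (x : ℝ) : ee n x * ee m x = ee (n + m) x := by
  rw [ee, ee, ee, ← Complex.exp_add]; push_cast; ring_nf

lemma ee_zero (x : ℝ) : ee 0 x = 1 := by simp [ee]

lemma ee_conj (n : ℤ) (x : ℝ) : (starRingEnd ℂ) (ee n x) = ee (-n) x := by
  rw [ee, ee, ← Complex.exp_conj]; congr 1
  simp only [map_div₀, _root_.map_mul, Complex.conj_I, map_ofNat, Complex.conj_ofReal, map_intCast]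
  push_cast; ring

noncomputable def chi (n : ℤ) : Multiplicative ℝ →* ℂ where
  toFun x := ee n (Multiplicative.toAdd x)
  map_one' := by simp [ee]
  map_mul' x y := by
    show ee n (Multiplicative.toAdd x + Multiplicative.toAdd y) = _
    simp only [ee, ← Complex.exp_add]; push_cast; ring_nf

lemma chi_inj : Function.Injective chi := by
  intro n m h
  by_contra hnm
  have hnm' : ((n : ℂ) - m) ≠ 0 := by
    simpa [sub_eq_zero] using fun hh => hnm (by exact_mod_cast hh)
  set x : ℝ := (2 * Real.pi) / ((n : ℝ) - m) with hxdef
  have hx := DFunLike.congr_fun h (Multiplicative.ofAdd x)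
  simp only [chi, MonoidHom.coe_mk, OneHom.coe_mk, toAdd_ofAdd] at hx
  have h1 : ee (n - m) x = 1 := by
    calc ee (n - m) x = ee n x * ee (-m) x := by rw [ee_mul]; ring_nf
    _ = ee m x * ee (-m) x := by rw [hx]
    _ = 1 := by rw [ee_mul]; simp [ee_zero]
  have h2 : ee (n - m) x = -1 := by
    rw [ee]
    have : Complex.I * ((n - m : ℤ) : ℂ) * (x : ℂ) / 2 = Real.pi * Complex.I := by
      rw [hxdef]; push_cast; field_simp
    rw [this, Complex.exp_pi_mul_I]
  rw [h1] at h2; norm_num at h2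

lemma extract {s : Finset ℤ} {c : ℤ → ℂ}
    (h : ∀ x : ℝ, ∑ n ∈ s, c n * ee n x = 0) : ∀ n ∈ s, c n = 0 := by
  have li : LinearIndependent ℂ (fun n : ℤ => (chi n : Multiplicative ℝ → ℂ)) :=
    (linearIndependent_monoidHom (Multiplicative ℝ) ℂ).comp chi chi_inj
  refine linearIndependent_iff'.mp li s c ?_
  funext y
  have := h (Multiplicative.toAdd y)
  simpa [chi, Finset.sum_apply] using this

noncomputable def PP (L : ℕ) (p : ℤ → ℝ) (x : ℝ) : ℂ :=
  ∑ n ∈ Finset.Icc (-(L : ℤ)) (L : ℤ), (p n : ℂ) * ee n x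


lemma sum_mul_conj (S : Finset ℤ) (p : ℤ → ℝ) (x : ℝ) :
    (∑ n ∈ S, (p n : ℂ) * ee n x) * (starRingEnd ℂ) (∑ n ∈ S, (p n : ℂ) * ee n x)
    = ∑ u ∈ S ×ˢ S, ((p u.1 * p u.2 : ℝ) : ℂ) * ee (u.1 - u.2) x := by
  rw [map_sum, Finset.sum_mul_sum, ← Finset.sum_product']
  refine Finset.sum_congr rfl fun u _ => ?_
  rw [_root_.map_mul, Complex.conj_ofReal, ee_conj]
  push_cast
  calc (p u.1 : ℂ) * ee u.1 x * ((p u.2 : ℂ) * ee (-u.2) x)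
      = (p u.1 : ℂ) * p u.2 * (ee u.1 x * ee (-u.2) x) := by ring
    _ = _ := by rw [ee_mul]; ring_nf


lemma coeff_top (M : ℕ) (hM : 1 ≤ M) (p q : ℤ → ℝ)
    (hnorm : ∀ x : ℝ, ‖PP M p x‖ ^ 2 + ‖PP M q x‖ ^ 2 = 1) :
    p (M : ℤ) * p (-(M : ℤ)) + q (M : ℤ) * q (-(M : ℤ)) = 0 := by
  classical
  simp only [PP] at hnorm
  have key : ∀ x : ℝ, ∑ k ∈ Finset.Icc (-(2 * M : ℤ)) (2 * M),
      ((∑ u ∈ ((Finset.Icc (-(M : ℤ)) M) ×ˢ (Finset.Icc (-(M : ℤ)) M)).filter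
          (fun u => u.1 - u.2 = k), ((p u.1 * p u.2 + q u.1 * q u.2 : ℝ) : ℂ))
        - (if k = 0 then 1 else 0)) * ee k x = 0 := by
    intro x
    have hC : (∑ n ∈ Finset.Icc (-(M : ℤ)) M, (p n : ℂ) * ee n x) *
        (starRingEnd ℂ) (∑ n ∈ Finset.Icc (-(M : ℤ)) M, (p n : ℂ) * ee n x) +
        (∑ n ∈ Finset.Icc (-(M : ℤ)) M, (q n : ℂ) * ee n x) *
        (starRingEnd ℂ) (∑ n ∈ Finset.Icc (-(M : ℤ)) M, (q n : ℂ) * ee n x) = 1 := by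
      have hre : Complex.normSq (∑ n ∈ Finset.Icc (-(M : ℤ)) M, (p n : ℂ) * ee n x) +
          Complex.normSq (∑ n ∈ Finset.Icc (-(M : ℤ)) M, (q n : ℂ) * ee n x) = 1 := by
        rw [← Complex.sq_norm, ← Complex.sq_norm]; exact hnorm x
      rw [Complex.mul_conj, Complex.mul_conj, ← Complex.ofReal_add, hre, Complex.ofReal_one]
    simp only [sub_mul, Finset.sum_sub_distrib]
    have h2 : ∑ k ∈ Finset.Icc (-(2 * M : ℤ)) (2 * M),
        (if k = 0 then (1 : ℂ) else 0) * ee k x = 1 := by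
      rw [Finset.sum_eq_single (0 : ℤ)]
      · simp [ee_zero]
      · intro b _ hb; simp [hb]
      · intro h; exfalso; apply h; simp only [Finset.mem_Icc]; omega
    rw [h2]
    have h3 : ∑ k ∈ Finset.Icc (-(2 * M : ℤ)) (2 * M),
        (∑ u ∈ ((Finset.Icc (-(M : ℤ)) M) ×ˢ (Finset.Icc (-(M : ℤ)) M)).filter
          (fun u => u.1 - u.2 = k), ((p u.1 * p u.2 + q u.1 * q u.2 : ℝ) : ℂ)) * ee k x
        = ∑ u ∈ (Finset.Icc (-(M : ℤ)) M) ×ˢ (Finset.Icc (-(M : ℤ)) M),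
            ((p u.1 * p u.2 + q u.1 * q u.2 : ℝ) : ℂ) * ee (u.1 - u.2) x := by
      rw [← Finset.sum_fiberwise_of_maps_to (g := fun u : ℤ × ℤ => u.1 - u.2)
        (t := Finset.Icc (-(2 * M : ℤ)) (2 * M))]
      · refine Finset.sum_congr rfl fun k _ => ?_
        rw [Finset.sum_mul]
        refine Finset.sum_congr rfl fun u hu => ?_
        rw [(Finset.mem_filter.mp hu).2]
      · intro u hu
        simp only [Finset.mem_product, Finset.mem_Icc] at hu
        simp only [Finset.mem_Icc]; omega
    rw [h3]
    have h4 : ∀ u : ℤ × ℤ, ((p u.1 * p u.2 + q u.1 * q u.2 : ℝ) : ℂ) * ee (u.1 - u.2) x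
        = ((p u.1 * p u.2 : ℝ) : ℂ) * ee (u.1 - u.2) x +
          ((q u.1 * q u.2 : ℝ) : ℂ) * ee (u.1 - u.2) x := by
      intro u; push_cast; ring
    rw [Finset.sum_congr rfl (fun u _ => h4 u), Finset.sum_add_distrib,
      ← sum_mul_conj, ← sum_mul_conj, hC, sub_self]
  have hc2M := extract key (2 * M) (by simp only [Finset.mem_Icc]; omega)
  have hfib : ((Finset.Icc (-(M : ℤ)) M) ×ˢ (Finset.Icc (-(M : ℤ)) M)).filter
      (fun u => u.1 - u.2 = (2 * M : ℤ)) = {((M : ℤ), (-(M : ℤ)))} := by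
    ext u
    simp only [Finset.mem_filter, Finset.mem_product, Finset.mem_Icc,
      Finset.mem_singleton, Prod.ext_iff]
    omega
  rw [hfib] at hc2M
  simp only [Finset.sum_singleton] at hc2M
  rw [if_neg (by omega : (2 * M : ℤ) ≠ 0), sub_zero] at hc2M
  exact_mod_cast hc2M

lemma exists_angle (c s : ℝ) (h : c ^ 2 + s ^ 2 = 1) :
    ∃ θ : ℝ, Real.cos (θ / 2) = c ∧ Real.sin (θ / 2) = s := by
  have habs : ‖(c : ℂ) + (s : ℂ) * Complex.I‖ = 1 := by
    rw [Complex.norm_def, Complex.normSq_add_mul_I, h, Real.sqrt_one]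
  obtain ⟨φ, hφ⟩ := (Complex.norm_eq_one_iff _).mp habs
  refine ⟨2 * φ, ?_, ?_⟩
  · have := congrArg Complex.re hφ
    rw [Complex.exp_ofReal_mul_I_re] at this
    simpa using this
  · have := congrArg Complex.im hφ
    rw [Complex.exp_ofReal_mul_I_im] at this
    simpa using this

lemma choose_cs (a b a' b' : ℝ) (h : a * a' + b * b' = 0) :
    ∃ c s : ℝ, c ^ 2 + s ^ 2 = 1 ∧ c * a + s * b = 0 ∧ c * b' - s * a' = 0 := by
  by_cases h0 : a = 0 ∧ b = 0
  · by_cases h1 : a' = 0 ∧ b' = 0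
    · exact ⟨1, 0, by norm_num, by simp [h0.1, h0.2], by simp [h1.1, h1.2]⟩
    · have hr : (0:ℝ) < Real.sqrt (a' ^ 2 + b' ^ 2) := by
        apply Real.sqrt_pos.mpr
        rcases not_and_or.mp h1 with h' | h' <;> positivity
      have hne : a' ^ 2 + b' ^ 2 ≠ 0 := by
        rcases not_and_or.mp h1 with h' | h' <;> positivity
      refine ⟨a' / Real.sqrt (a' ^ 2 + b' ^ 2), b' / Real.sqrt (a' ^ 2 + b' ^ 2), ?_, ?_, ?_⟩
      · field_simp; rw [Real.sq_sqrt (by positivity)]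
      · simp [h0.1, h0.2]
      · field_simp; ring
  · have hr : (0:ℝ) < Real.sqrt (a ^ 2 + b ^ 2) := by
      apply Real.sqrt_pos.mpr
      rcases not_and_or.mp h0 with h' | h' <;> positivity
    have hne : a ^ 2 + b ^ 2 ≠ 0 := by
      rcases not_and_or.mp h0 with h' | h' <;> positivity
    refine ⟨b / Real.sqrt (a ^ 2 + b ^ 2), -(a / Real.sqrt (a ^ 2 + b ^ 2)), ?_, ?_, ?_⟩
    · field_simp; rw [Real.sq_sqrt (by positivity)]; ring
    · field_simp; ring
    · field_simp; linarith

lemma ee_one (n : ℤ) (x : ℝ) : ee n x * ee (-n) x = 1 := by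
  rw [ee_mul]; simp [ee_zero]

lemma ee_abs (n : ℤ) (x : ℝ) : ‖ee n x‖ = 1 := by
  have : ee n x = Complex.exp ((((n : ℝ) * x / 2 : ℝ)) * Complex.I) := by
    rw [ee]; congr 1; push_cast; ring
  rw [this, Complex.norm_exp_ofReal_mul_I]

lemma conj_PP (L : ℕ) (p : ℤ → ℝ) (x : ℝ) :
    (starRingEnd ℂ) (PP L p x) = ∑ n ∈ Finset.Icc (-(L : ℤ)) (L : ℤ), (p n : ℂ) * ee (-n) x := by
  rw [PP, map_sum]
  exact Finset.sum_congr rfl fun n _ => by rw [_root_.map_mul, Complex.conj_ofReal, ee_conj]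

lemma sum_shrink_hi (L : ℕ) (r : ℤ → ℝ) (x : ℝ) (h1 : r ((L : ℤ) + 1) = 0)
    (h2 : r ((L : ℤ) + 2) = 0) :
    ∑ m ∈ Finset.Icc (-(L : ℤ)) ((L : ℤ) + 2), (r m : ℂ) * ee m x = PP L r x := by
  rw [PP]; symm
  apply Finset.sum_subset (Finset.Icc_subset_Icc (le_refl _) (by omega))
  intro m hm hnm
  simp only [Finset.mem_Icc] at hm hnm
  have : m = (L : ℤ) + 1 ∨ m = (L : ℤ) + 2 := by omega
  rcases this with h | h <;> rw [h] <;> simp [h1, h2]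

lemma sum_shrink_lo (L : ℕ) (r : ℤ → ℝ) (x : ℝ) (h1 : r (-(L : ℤ) - 1) = 0)
    (h2 : r (-(L : ℤ) - 2) = 0) :
    ∑ m ∈ Finset.Icc (-(L : ℤ) - 2) (L : ℤ), (r m : ℂ) * ee m x = PP L r x := by
  rw [PP]; symm
  apply Finset.sum_subset (Finset.Icc_subset_Icc (by omega) (le_refl _))
  intro m hm hnm
  simp only [Finset.mem_Icc] at hm hnm
  have : m = -(L : ℤ) - 1 ∨ m = -(L : ℤ) - 2 := by omega
  rcases this with h | h <;> rw [h] <;> simp [h1, h2]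

lemma mat_step (P Q Pc Qc E F c s : ℂ) (hEF : E * F = 1) (h1 : c ^ 2 + s ^ 2 = 1) :
    !![P, -Q; Qc, Pc] =
    !![(c * P + s * Q) * E, -((c * Q - s * P) * F);
       (c * Qc - s * Pc) * E, (c * Pc + s * Qc) * F] *
      !![F * c, -(F * s); E * s, E * c] := by
  ext i j
  fin_cases i <;> fin_cases j <;> simp [Matrix.mul_apply, Fin.sum_univ_two]
  · linear_combination (-(c ^ 2 + s ^ 2) * P) * hEF + (-P) * h1
  · linear_combination ((c ^ 2 + s ^ 2) * Q) * hEF + Q * h1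
  · linear_combination (-(c ^ 2 + s ^ 2) * Qc) * hEF + (-Qc) * h1
  · linear_combination (-(c ^ 2 + s ^ 2) * Pc) * hEF + (-Pc) * h1

theorem key (L : ℕ) : ∀ (p q : ℤ → ℝ),
    (∀ n : ℤ, (L : ℤ) < |n| → p n = 0) → (∀ n : ℤ, (L : ℤ) < |n| → q n = 0) →
    (∀ n : ℤ, n % 2 ≠ (L : ℤ) % 2 → p n = 0) → (∀ n : ℤ, n % 2 ≠ (L : ℤ) % 2 → q n = 0) →
    (∀ x : ℝ, ‖PP L p x‖ ^ 2 + ‖PP L q x‖ ^ 2 = 1) →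
    ∃ θ : Fin (L + 1) → ℝ, ∀ x : ℝ,
      !![PP L p x, -PP L q x; (starRingEnd ℂ) (PP L q x), (starRingEnd ℂ) (PP L p x)] =
      RY (θ 0) * (List.ofFn fun j : Fin L => RZ x * RY (θ j.succ)).prod := by
  induction L with
  | zero =>
    intro p q _ _ _ _ hnorm
    have hPP : ∀ (r : ℤ → ℝ) (x : ℝ), PP 0 r x = (r 0 : ℂ) := by
      intro r x
      rw [PP]
      norm_num
      rw [ee_zero, mul_one]
    have h1 : p 0 ^ 2 + q 0 ^ 2 = 1 := by
      have := hnorm 0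
      rw [hPP, hPP] at this
      simpa [Complex.sq_norm, Complex.normSq_ofReal, sq] using this
    obtain ⟨θ0, hc, hs⟩ := exists_angle (p 0) (q 0) h1
    refine ⟨fun _ => θ0, fun x => ?_⟩
    simp only [hPP, List.ofFn_zero, List.prod_nil, mul_one, RY, hc, hs, Complex.conj_ofReal]
  | succ L ih =>
    intro p q hpdeg hqdeg hppar hqpar hnorm
    have htop : p ((L : ℤ) + 1) * p (-((L : ℤ) + 1)) + q ((L : ℤ) + 1) * q (-((L : ℤ) + 1)) = 0 := by
      have h := coeff_top (L + 1) (by omega) p q hnorm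
      push_cast at h
      convert h using 3 <;> push_cast <;> ring
    obtain ⟨c, s, hcs1, hcs2, hcs3⟩ :=
      choose_cs (p ((L : ℤ) + 1)) (q ((L : ℤ) + 1)) (p (-((L : ℤ) + 1))) (q (-((L : ℤ) + 1))) htop
    obtain ⟨θn, hθc, hθs⟩ := exists_angle c s hcs1
    set p' : ℤ → ℝ := fun n => c * p (n - 1) + s * q (n - 1) with hp'
    set q' : ℤ → ℝ := fun n => c * q (n + 1) - s * p (n + 1) with hq'
    have hparpL : p (L : ℤ) = 0 := hppar _ (by push_cast; omega)
    have hparqL : q (L : ℤ) = 0 := hqpar _ (by push_cast; omega)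
    have hparpL' : p (-(L : ℤ)) = 0 := hppar _ (by push_cast; omega)
    have hparqL' : q (-(L : ℤ)) = 0 := hqpar _ (by push_cast; omega)
    have habs : ∀ a n : ℤ, 0 ≤ a → (a < n ∨ n < -a) → a < |n| := by
      intro a n ha h; rcases abs_cases n with ⟨h1, h2⟩ | ⟨h1, h2⟩ <;> omega
    have hp'deg : ∀ n : ℤ, (L : ℤ) < |n| → p' n = 0 := by
      intro n hn
      show c * p (n - 1) + s * q (n - 1) = 0
      have hn2 : (L : ℤ) < n ∨ n < -(L : ℤ) := by
        rcases abs_cases n with ⟨h1, h2⟩ | ⟨h1, h2⟩ <;> omega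
      rcases hn2 with h | h
      · rcases eq_or_lt_of_le (by omega : (L : ℤ) + 1 ≤ n) with h2 | h2
        · rw [show n - 1 = (L : ℤ) by omega, hparpL, hparqL]; ring
        · rcases eq_or_lt_of_le (by omega : (L : ℤ) + 2 ≤ n) with h3 | h3
          · rw [show n - 1 = (L : ℤ) + 1 by omega]; exact hcs2
          · rw [hpdeg (n - 1) (habs _ _ (by omega) (by push_cast; omega)),
              hqdeg (n - 1) (habs _ _ (by omega) (by push_cast; omega))]; ring
      · rw [hpdeg (n - 1) (habs _ _ (by omega) (by push_cast; omega)),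
          hqdeg (n - 1) (habs _ _ (by omega) (by push_cast; omega))]; ring
    have hq'deg : ∀ n : ℤ, (L : ℤ) < |n| → q' n = 0 := by
      intro n hn
      show c * q (n + 1) - s * p (n + 1) = 0
      have hn2 : (L : ℤ) < n ∨ n < -(L : ℤ) := by
        rcases abs_cases n with ⟨h1, h2⟩ | ⟨h1, h2⟩ <;> omega
      rcases hn2 with h | h
      · rw [hpdeg (n + 1) (habs _ _ (by omega) (by push_cast; omega)),
          hqdeg (n + 1) (habs _ _ (by omega) (by push_cast; omega))]; ring
      · rcases eq_or_lt_of_le (by omega : n ≤ -(L : ℤ) - 1) with h2 | h2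
        · rw [show n + 1 = -(L : ℤ) by omega, hparpL', hparqL']; ring
        · rcases eq_or_lt_of_le (by omega : n ≤ -(L : ℤ) - 2) with h3 | h3
          · rw [show n + 1 = -((L : ℤ) + 1) by omega]; exact hcs3
          · rw [hpdeg (n + 1) (habs _ _ (by omega) (by push_cast; omega)),
              hqdeg (n + 1) (habs _ _ (by omega) (by push_cast; omega))]; ring
    have hp'par : ∀ n : ℤ, n % 2 ≠ (L : ℤ) % 2 → p' n = 0 := by
      intro n hn
      show c * p (n - 1) + s * q (n - 1) = 0
      rw [hppar (n - 1) (by push_cast; omega), hqpar (n - 1) (by push_cast; omega)]; ring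
    have hq'par : ∀ n : ℤ, n % 2 ≠ (L : ℤ) % 2 → q' n = 0 := by
      intro n hn
      show c * q (n + 1) - s * p (n + 1) = 0
      rw [hppar (n + 1) (by push_cast; omega), hqpar (n + 1) (by push_cast; omega)]; ring
    have hPfun : ∀ x : ℝ, PP L p' x = ((c : ℂ) * PP (L + 1) p x + (s : ℂ) * PP (L + 1) q x) * ee 1 x := by
      intro x
      have e1 : ((c : ℂ) * PP (L + 1) p x + (s : ℂ) * PP (L + 1) q x) * ee 1 x
          = ∑ n ∈ Finset.Icc (-((L : ℤ) + 1)) ((L : ℤ) + 1), (p' (n + 1) : ℂ) * ee (n + 1) x := by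
        rw [PP, PP, Finset.mul_sum, Finset.mul_sum, ← Finset.sum_add_distrib, Finset.sum_mul]
        apply Finset.sum_congr (by push_cast; rfl)
        intro n _
        have hpn : (p' (n + 1) : ℂ) = (c : ℂ) * (p n : ℂ) + (s : ℂ) * (q n : ℂ) := by
          show ((c * p (n + 1 - 1) + s * q (n + 1 - 1) : ℝ) : ℂ) = _
          rw [show n + 1 - 1 = n by ring]; push_cast; ring
        rw [hpn, ← ee_mul n 1 x]; ring
      rw [e1]
      have e2 : ∑ n ∈ Finset.Icc (-((L : ℤ) + 1)) ((L : ℤ) + 1), (p' (n + 1) : ℂ) * ee (n + 1) x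
          = ∑ m ∈ Finset.Icc (-(L : ℤ)) ((L : ℤ) + 2), (p' m : ℂ) * ee m x := by
        rw [show Finset.Icc (-(L : ℤ)) ((L : ℤ) + 2)
            = Finset.Icc (-((L : ℤ) + 1) + 1) (((L : ℤ) + 1) + 1) by congr 1 <;> ring,
          ← Finset.map_add_right_Icc, Finset.sum_map]
        simp [addRightEmbedding]
      have v1 : p' ((L : ℤ) + 1) = 0 := by
        show c * p ((L : ℤ) + 1 - 1) + s * q ((L : ℤ) + 1 - 1) = 0
        rw [show (L : ℤ) + 1 - 1 = (L : ℤ) by ring, hparpL, hparqL]; ring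
      have v2 : p' ((L : ℤ) + 2) = 0 := by
        show c * p ((L : ℤ) + 2 - 1) + s * q ((L : ℤ) + 2 - 1) = 0
        rw [show (L : ℤ) + 2 - 1 = (L : ℤ) + 1 by ring]; exact hcs2
      rw [e2, sum_shrink_hi L p' x v1 v2]
    have hQfun : ∀ x : ℝ, PP L q' x = ((c : ℂ) * PP (L + 1) q x - (s : ℂ) * PP (L + 1) p x) * ee (-1) x := by
      intro x
      have e1 : ((c : ℂ) * PP (L + 1) q x - (s : ℂ) * PP (L + 1) p x) * ee (-1) x
          = ∑ n ∈ Finset.Icc (-((L : ℤ) + 1)) ((L : ℤ) + 1), (q' (n - 1) : ℂ) * ee (n - 1) x := by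
        rw [PP, PP, Finset.mul_sum, Finset.mul_sum, ← Finset.sum_sub_distrib, Finset.sum_mul]
        apply Finset.sum_congr (by push_cast; rfl)
        intro n _
        have hqn : (q' (n - 1) : ℂ) = (c : ℂ) * (q n : ℂ) - (s : ℂ) * (p n : ℂ) := by
          show ((c * q (n - 1 + 1) - s * p (n - 1 + 1) : ℝ) : ℂ) = _
          rw [show n - 1 + 1 = n by ring]; push_cast; ring
        rw [hqn, show n - 1 = n + (-1) by ring, ← ee_mul n (-1) x]; ring
      rw [e1]
      have e2 : ∑ n ∈ Finset.Icc (-((L : ℤ) + 1)) ((L : ℤ) + 1), (q' (n - 1) : ℂ) * ee (n - 1) x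
          = ∑ m ∈ Finset.Icc (-(L : ℤ) - 2) (L : ℤ), (q' m : ℂ) * ee m x := by
        rw [show Finset.Icc (-(L : ℤ) - 2) ((L : ℤ))
            = Finset.Icc (-((L : ℤ) + 1) + (-1)) (((L : ℤ) + 1) + (-1)) by congr 1 <;> ring,
          ← Finset.map_add_right_Icc, Finset.sum_map]
        apply Finset.sum_congr rfl
        intro n _
        simp only [addRightEmbedding, Function.Embedding.coeFn_mk]
        rw [show n + (-1) = n - 1 by ring]
      have v1 : q' (-(L : ℤ) - 1) = 0 := by
        show c * q (-(L : ℤ) - 1 + 1) - s * p (-(L : ℤ) - 1 + 1) = 0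
        rw [show -(L : ℤ) - 1 + 1 = -(L : ℤ) by ring, hparpL', hparqL']; ring
      have v2 : q' (-(L : ℤ) - 2) = 0 := by
        show c * q (-(L : ℤ) - 2 + 1) - s * p (-(L : ℤ) - 2 + 1) = 0
        rw [show -(L : ℤ) - 2 + 1 = -((L : ℤ) + 1) by ring]; exact hcs3
      rw [e2, sum_shrink_lo L q' x v1 v2]
    have hnorm' : ∀ x : ℝ, ‖PP L p' x‖ ^ 2 + ‖PP L q' x‖ ^ 2 = 1 := by
      intro x
      rw [hPfun x, hQfun x, norm_mul, norm_mul, ee_abs, ee_abs,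
        mul_one, mul_one]
      have habs2 : ∀ z w : ℂ, ‖(c : ℂ) * z + (s : ℂ) * w‖ ^ 2
          + ‖(c : ℂ) * w - (s : ℂ) * z‖ ^ 2
          = (c ^ 2 + s ^ 2) * (‖z‖ ^ 2 + ‖w‖ ^ 2) := by
        intro z w
        rw [Complex.sq_norm, Complex.sq_norm, Complex.sq_norm, Complex.sq_norm]
        simp only [Complex.normSq_apply, Complex.add_re, Complex.add_im, Complex.sub_re,
          Complex.sub_im, Complex.mul_re, Complex.mul_im, Complex.ofReal_re, Complex.ofReal_im]
        ring
      rw [habs2, hcs1, one_mul, hnorm x]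
    obtain ⟨θ', hθ'⟩ := ih p' q' hp'deg hq'deg hp'par hq'par hnorm'
    have hc2 : (c : ℂ) ^ 2 + (s : ℂ) ^ 2 = 1 := by exact_mod_cast hcs1
    refine ⟨Fin.snoc θ' θn, fun x => ?_⟩
    have hz1 : Complex.exp (-(Complex.I * x) / 2) = ee (-1) x := by
      rw [ee]; congr 1; push_cast; ring
    have hz2 : Complex.exp (Complex.I * x / 2) = ee 1 x := by
      rw [ee]; congr 1; push_cast; ring
    have h0 : (Fin.snoc θ' θn : Fin (L + 2) → ℝ) 0 = θ' 0 := by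
      rw [show (0 : Fin (L + 2)) = Fin.castSucc (0 : Fin (L + 1)) by simp, Fin.snoc_castSucc]
    have hsplit : (List.ofFn fun j : Fin (L + 1) =>
          RZ x * RY ((Fin.snoc θ' θn : Fin (L + 2) → ℝ) j.succ)).prod
        = (List.ofFn fun j : Fin L => RZ x * RY (θ' j.succ)).prod * (RZ x * RY θn) := by
      rw [List.ofFn_succ', List.prod_concat]
      simp only [Fin.succ_castSucc, Fin.snoc_castSucc, Fin.succ_last, Fin.snoc_last]
    rw [h0, hsplit, ← mul_assoc, ← hθ' x]
    have hcjq : (starRingEnd ℂ) (PP L q' x) = ((c : ℂ) * (starRingEnd ℂ) (PP (L + 1) q x)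
        - (s : ℂ) * (starRingEnd ℂ) (PP (L + 1) p x)) * ee 1 x := by
      rw [hQfun x]
      simp only [_root_.map_mul, _root_.map_sub, Complex.conj_ofReal, ee_conj, neg_neg]
    have hcjp : (starRingEnd ℂ) (PP L p' x) = ((c : ℂ) * (starRingEnd ℂ) (PP (L + 1) p x)
        + (s : ℂ) * (starRingEnd ℂ) (PP (L + 1) q x)) * ee (-1) x := by
      rw [hPfun x]
      simp only [_root_.map_mul, _root_.map_add, Complex.conj_ofReal, ee_conj]
    have hZY : RZ x * RY θn
        = !![ee (-1) x * (c : ℂ), -(ee (-1) x * (s : ℂ)); ee 1 x * (s : ℂ), ee 1 x * (c : ℂ)] := by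
      rw [RZ, RY, hθc, hθs]
      ext i j
      fin_cases i <;> fin_cases j <;>
        simp [Matrix.mul_apply, Fin.sum_univ_two, hz1, hz2] <;> ring
    rw [hcjq, hcjp, hPfun x, hQfun x, hZY]
    exact mat_step (PP (L + 1) p x) (PP (L + 1) q x) ((starRingEnd ℂ) (PP (L + 1) p x))
      ((starRingEnd ℂ) (PP (L + 1) q x)) (ee 1 x) (ee (-1) x) c s (ee_one 1 x) hc2

/-- if real-coefficient Laurent polynomials `P, Q` in `e^{ix/2}` have degree at
most `L`, parity `L mod 2`, and satisfy `|P|² + |Q|² = 1` on ℝ, then `[[P, -Q],[Q*, P*]]`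
equals a QNN `R_Y(θ₀) ∏_{j=1}^L R_Z(x) R_Y(θ_j)`. -/
theorem stmt1 (L : ℕ) (p q : ℤ → ℝ) (P Q : ℝ → ℂ)
    (hP : ∀ x : ℝ, P x = ∑ n ∈ Finset.Icc (-(L : ℤ)) (L : ℤ),
        (p n : ℂ) * Complex.exp (Complex.I * (n : ℂ) * (x : ℂ) / 2))
    (hQ : ∀ x : ℝ, Q x = ∑ n ∈ Finset.Icc (-(L : ℤ)) (L : ℤ),
        (q n : ℂ) * Complex.exp (Complex.I * (n : ℂ) * (x : ℂ) / 2))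
    (hpdeg : ∀ n : ℤ, (L : ℤ) < |n| → p n = 0)
    (hqdeg : ∀ n : ℤ, (L : ℤ) < |n| → q n = 0)
    (hppar : ∀ n : ℤ, n % 2 ≠ (L : ℤ) % 2 → p n = 0)
    (hqpar : ∀ n : ℤ, n % 2 ≠ (L : ℤ) % 2 → q n = 0)
    (hnorm : ∀ x : ℝ, ‖P x‖ ^ 2 + ‖Q x‖ ^ 2 = 1) :
    ∃ θ : Fin (L + 1) → ℝ, ∀ x : ℝ,
      !![P x, -Q x; (starRingEnd ℂ) (Q x), (starRingEnd ℂ) (P x)] =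
      RY (θ 0) * (List.ofFn fun j : Fin L => RZ x * RY (θ j.succ)).prod := by
  obtain ⟨θ, hθ⟩ := key L p q hpdeg hqdeg hppar hqpar (fun x => by
    simp only [PP, ee]
    rw [← hP x, ← hQ x]
    exact hnorm x)
  refine ⟨θ, fun x => ?_⟩
  have h := hθ x
  simp only [PP, ee] at h
  rw [hP x, hQ x]
  exact h
end

section
/- Let p_d, p_{-d}, q_d, q_{-d} be complex numbers, not all four zero, such that p_d · conj(p_{-d}) + q_d · conj(q_{-d}) = 0, and such that (p_d, q_d) ≠ (0,0) or (p_{-d}, q_{-d}) ≠ (0,0). Then there exist real numbers θ and φ such that cos(θ/2) e^{iφ/2} p_d + sin(θ/2) e^{-iφ/2} q_d = 0 and -sin(θ/2) e^{iφ/2} p_{-d} + cos(θ/2) e^{-iφ/2} q_{-d} = 0 hold simultaneously. -/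
open Complex

/-- Representation lemma: any (a,b) on the complex unit sphere with a*b real
can be written as (cos(θ/2) e^{iφ/2}, sin(θ/2) e^{-iφ/2}). -/
lemma rep (a b : ℂ) (h1 : ‖a‖ ^ 2 + ‖b‖ ^ 2 = 1)
    (h2 : (a * b).im = 0) :
    ∃ θ φ : ℝ,
      (Real.cos (θ / 2) : ℂ) * Complex.exp (Complex.I * (φ : ℂ) / 2) = a ∧
      (Real.sin (θ / 2) : ℂ) * Complex.exp (-(Complex.I * (φ : ℂ)) / 2) = b := by
  rcases eq_or_ne a 0 with ha | ha
  · -- a = 0, so |b| = 1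
    have hb : ‖b‖ = 1 := by
      have : ‖b‖ ^ 2 = 1 := by simpa [ha] using h1
      nlinarith [norm_nonneg b]
    refine ⟨Real.pi, -2 * b.arg, ?_, ?_⟩
    · simp [ha]
    · have h3 : -(Complex.I * ((-2 * b.arg : ℝ) : ℂ)) / 2 = (b.arg : ℝ) * Complex.I := by
        push_cast; ring
      rw [h3]
      have := Complex.norm_mul_exp_arg_mul_I b
      rw [hb] at this
      simpa using this
  · -- a ≠ 0; take ψ = arg a, sin = (a*b).re / |a|
    have hA : (0:ℝ) < ‖a‖ := norm_pos_iff.mpr ha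
    set s : ℝ := (a * b).re / ‖a‖ with hs
    have habre : ((a*b).re : ℂ) = a * b := by
      rw [Complex.ext_iff]; simp [h2]
    have hs2 : s ^ 2 = ‖b‖ ^ 2 := by
      have h4 : (a*b).re ^ 2 = ‖(a*b)‖ ^ 2 := by
        rw [Complex.sq_norm, Complex.normSq_apply, h2]; ring
      rw [norm_mul] at h4
      rw [hs, div_pow, h4]
      field_simp
    have hcs : ‖a‖ ^ 2 + s ^ 2 = 1 := by rw [hs2]; exact h1
    have hs1 : -1 ≤ s ∧ s ≤ 1 := by constructor <;> nlinarith [norm_nonneg a, sq_nonneg (‖a‖)]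
    refine ⟨2 * Real.arcsin s, 2 * a.arg, ?_, ?_⟩
    · have ht : (2 * Real.arcsin s) / 2 = Real.arcsin s := by ring
      have hφ : Complex.I * ((2 * a.arg : ℝ) : ℂ) / 2 = (a.arg : ℝ) * Complex.I := by
        push_cast; ring
      rw [ht, hφ, Real.cos_arcsin]
      have : Real.sqrt (1 - s ^ 2) = ‖a‖ := by
        rw [show (1 : ℝ) - s ^ 2 = ‖a‖ ^ 2 by linarith]
        exact Real.sqrt_sq (norm_nonneg a)
      rw [this, Complex.norm_mul_exp_arg_mul_I a]
    · have ht : (2 * Real.arcsin s) / 2 = Real.arcsin s := by ring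
      have hφ : -(Complex.I * ((2 * a.arg : ℝ) : ℂ)) / 2 = -((a.arg : ℝ) * Complex.I) := by
        push_cast; ring
      rw [ht, hφ, Real.sin_arcsin hs1.1 hs1.2]
      -- s * exp(-arg a * I) = b, multiply by a
      have key : (s : ℂ) * Complex.exp (-((a.arg : ℝ) * Complex.I)) * a = b * a := by
        have haa : Complex.exp (-((a.arg : ℝ) * Complex.I)) * a = ((‖a‖ : ℝ) : ℂ) := by
          nth_rewrite 2 [← Complex.norm_mul_exp_arg_mul_I a]
          rw [show Complex.exp (-((a.arg : ℝ) * Complex.I)) * (((‖a‖ : ℝ) : ℂ) * Complex.exp ((a.arg:ℝ) * Complex.I)) = ((‖a‖ : ℝ) : ℂ) * (Complex.exp (-((a.arg : ℝ) * Complex.I)) * Complex.exp ((a.arg:ℝ) * Complex.I)) from by ring, ← Complex.exp_add]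
          simp
        have hsa : (s : ℂ) * ((‖a‖ : ℝ) : ℂ) = a * b := by
          rw [hs]; push_cast
          rw [div_mul_cancel₀ _ (by exact_mod_cast hA.ne' : ((‖a‖ : ℝ) : ℂ) ≠ 0)]
          exact habre
        rw [mul_assoc, haa, hsa]; ring
      exact mul_right_cancel₀ ha key

/-- From the representation, conjugate forms. -/
lemma rep' (a b : ℂ) (h1 : ‖a‖ ^ 2 + ‖b‖ ^ 2 = 1)
    (h2 : (a * b).im = 0) :
    ∃ θ φ : ℝ,
      (Real.cos (θ / 2) : ℂ) * Complex.exp (Complex.I * (φ : ℂ) / 2) = a ∧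
      (Real.sin (θ / 2) : ℂ) * Complex.exp (-(Complex.I * (φ : ℂ)) / 2) = b ∧
      (Real.sin (θ / 2) : ℂ) * Complex.exp (Complex.I * (φ : ℂ) / 2) = (starRingEnd ℂ) b ∧
      (Real.cos (θ / 2) : ℂ) * Complex.exp (-(Complex.I * (φ : ℂ)) / 2) = (starRingEnd ℂ) a := by
  obtain ⟨θ, φ, hA, hB⟩ := rep a b h1 h2
  refine ⟨θ, φ, hA, hB, ?_, ?_⟩
  · have := congrArg (starRingEnd ℂ) hB
    rw [map_mul, Complex.conj_ofReal, ← Complex.exp_conj] at this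
    rw [← this]
    congr 2
    simp [map_div₀, map_ofNat, Complex.conj_I, Complex.conj_ofReal]
  · have := congrArg (starRingEnd ℂ) hA
    rw [map_mul, Complex.conj_ofReal, ← Complex.exp_conj] at this
    rw [← this]
    congr 2
    simp [map_div₀, map_ofNat, Complex.conj_I, Complex.conj_ofReal]

/-- Build a normalized pair proportional to (x, y) with real product. -/
lemma build (x y : ℂ) (hxy : ¬(x = 0 ∧ y = 0)) :
    ∃ a b c : ℂ, ‖a‖ ^ 2 + ‖b‖ ^ 2 = 1 ∧ (a * b).im = 0 ∧
      c ≠ 0 ∧ a = c * x ∧ b = c * y := by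
  set r : ℝ := Real.sqrt (‖x‖ ^ 2 + ‖y‖ ^ 2) with hr
  have hpos : 0 < ‖x‖ ^ 2 + ‖y‖ ^ 2 := by
    rcases not_and_or.mp hxy with h | h
    · have := norm_pos_iff.mpr h
      nlinarith [norm_nonneg y]
    · have := norm_pos_iff.mpr h
      nlinarith [norm_nonneg x]
  have hrpos : 0 < r := Real.sqrt_pos.mpr hpos
  have hr2 : r ^ 2 = ‖x‖ ^ 2 + ‖y‖ ^ 2 := Real.sq_sqrt hpos.le
  set w : ℂ := x * y with hw
  set μ : ℂ := Complex.exp ((-(w.arg) / 2 : ℝ) * Complex.I) with hμ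
  have hμabs : ‖μ‖ = 1 := Complex.norm_exp_ofReal_mul_I _
  set c : ℂ := μ / (r : ℂ) with hc
  have hcne : c ≠ 0 := by
    apply div_ne_zero
    · exact Complex.exp_ne_zero _
    · exact_mod_cast hrpos.ne'
  refine ⟨c * x, c * y, c, ?_, ?_, hcne, rfl, rfl⟩
  · have habsc : ‖c‖ = 1 / r := by
      rw [hc, norm_div, hμabs, Complex.norm_real, Real.norm_eq_abs, abs_of_pos hrpos]
    rw [norm_mul, norm_mul, habsc]
    field_simp
    linarith [hr2]
  · -- (c*x)*(c*y) = μ² * w / r², and μ² * w = |w|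
    have hμ2 : μ * μ = Complex.exp ((-(w.arg) : ℝ) * Complex.I) := by
      rw [hμ, ← Complex.exp_add]
      congr 1
      push_cast
      ring
    have hμw : μ * μ * w = ((‖w‖ : ℝ) : ℂ) := by
      rw [hμ2]
      nth_rewrite 2 [← Complex.norm_mul_exp_arg_mul_I w]
      rw [show Complex.exp ((-(w.arg) : ℝ) * Complex.I) * (((‖w‖ : ℝ) : ℂ) * Complex.exp ((w.arg : ℝ) * Complex.I)) = ((‖w‖ : ℝ) : ℂ) * (Complex.exp ((-(w.arg) : ℝ) * Complex.I) * Complex.exp ((w.arg : ℝ) * Complex.I)) from by ring, ← Complex.exp_add]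
      push_cast
      simp
    have : (c * x) * (c * y) = ((‖w‖ / r ^ 2 : ℝ) : ℂ) := by
      rw [hc]
      push_cast
      rw [show μ / (r:ℂ) * x * (μ / (r:ℂ) * y) = (μ * μ * (x * y)) / ((r:ℂ) * (r:ℂ)) from by ring, ← hw, hμw]
      push_cast
      ring
    rw [this]
    exact Complex.ofReal_im _

/-- angle selection with complex coefficients: given the orthogonality
condition `p_d conj(p_{-d}) + q_d conj(q_{-d}) = 0`, not all four coefficients zero, there
exist real `θ, φ` cancelling both leading coefficients simultaneously. -/
theorem stmt5 (pd pmd qd qmd : ℂ)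
    (hne : ¬(pd = 0 ∧ pmd = 0 ∧ qd = 0 ∧ qmd = 0))
    (hne' : (pd, qd) ≠ (0, 0) ∨ (pmd, qmd) ≠ (0, 0))
    (horth : pd * (starRingEnd ℂ) pmd + qd * (starRingEnd ℂ) qmd = 0) :
    ∃ θ φ : ℝ,
      (Real.cos (θ / 2) : ℂ) * Complex.exp (Complex.I * (φ : ℂ) / 2) * pd +
        (Real.sin (θ / 2) : ℂ) * Complex.exp (-(Complex.I * (φ : ℂ)) / 2) * qd = 0 ∧
      -((Real.sin (θ / 2) : ℂ) * Complex.exp (Complex.I * (φ : ℂ) / 2) * pmd) +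
        (Real.cos (θ / 2) : ℂ) * Complex.exp (-(Complex.I * (φ : ℂ)) / 2) * qmd = 0 := by
  have horth' : (starRingEnd ℂ) pd * pmd + (starRingEnd ℂ) qd * qmd = 0 := by
    have := congrArg (starRingEnd ℂ) horth
    simpa using this
  by_cases hpq : pd = 0 ∧ qd = 0
  · -- first equation trivial; handle the second pair
    have hmq : ¬((starRingEnd ℂ) pmd = 0 ∧ (starRingEnd ℂ) qmd = 0) := by
      have h : (pmd, qmd) ≠ (0, 0) := by
        rcases hne' with h | h
        · exact absurd (Prod.ext hpq.1 hpq.2) h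
        · exact h
      simp only [map_eq_zero]
      intro hc
      exact h (Prod.ext hc.1 hc.2)
    obtain ⟨a, b, c, h1, h2, hcne, hax, hby⟩ := build ((starRingEnd ℂ) pmd) ((starRingEnd ℂ) qmd) hmq
    obtain ⟨θ, φ, hA, hB, hB', hA'⟩ := rep' a b h1 h2
    refine ⟨θ, φ, ?_, ?_⟩
    · rw [hA, hB, hpq.1, hpq.2]; ring
    · rw [hB', hA', hax, hby, map_mul, map_mul]
      simp only [Complex.conj_conj]
      ring
  · obtain ⟨a, b, c, h1, h2, hcne, hax, hby⟩ := build (-qd) pd (by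
      intro hc
      exact hpq ⟨hc.2, neg_eq_zero.mp hc.1⟩)
    obtain ⟨θ, φ, hA, hB, hB', hA'⟩ := rep' a b h1 h2
    refine ⟨θ, φ, ?_, ?_⟩
    · rw [hA, hB, hax, hby]; ring
    · rw [hB', hA', hax, hby, map_mul, map_mul, map_neg]
      -- -(conj c * conj pd * pmd) + conj c * (-(conj qd)) * qmd ... equals -conj c * horth'
      linear_combination (-(starRingEnd ℂ) c) * horth'
end

section
/- Let p_d, p_{-d}, q_d, q_{-d} be real numbers satisfying p_d · p_{-d} + q_d · q_{-d} = 0. Then there exists a real number θ such that cos(θ/2) p_d + sin(θ/2) q_d = 0 and -sin(θ/2) p_{-d} + cos(θ/2) q_{-d} = 0 hold simultaneously. -/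
/-- angle selection with real coefficients: if
`p_d p_{-d} + q_d q_{-d} = 0` then some real `θ` cancels both leading coefficients. -/
theorem stmt6 (pd pmd qd qmd : ℝ) (horth : pd * pmd + qd * qmd = 0) :
    ∃ θ : ℝ,
      Real.cos (θ / 2) * pd + Real.sin (θ / 2) * qd = 0 ∧
      -(Real.sin (θ / 2) * pmd) + Real.cos (θ / 2) * qmd = 0 := by
  by_cases h : pd = 0 ∧ qd = 0
  · obtain ⟨hp, hq⟩ := h
    by_cases hz : (pmd : ℂ) + qmd * Complex.I = 0
    · have h1 : pmd = 0 := by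
        have := congrArg Complex.re hz; simpa using this
      have h2 : qmd = 0 := by
        have := congrArg Complex.im hz; simpa using this
      exact ⟨0, by simp [hp, hq], by simp [h1, h2]⟩
    · set z : ℂ := pmd + qmd * Complex.I with hzdef
      refine ⟨2 * z.arg, ?_, ?_⟩
      · simp [hp, hq]
      · have hc : Real.cos z.arg = pmd / ‖z‖ := by
          rw [Complex.cos_arg hz]; simp [hzdef]
        have hs : Real.sin z.arg = qmd / ‖z‖ := by
          rw [Complex.sin_arg]; simp [hzdef]
        rw [mul_div_cancel_left₀ _ (two_ne_zero), hc, hs]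
        ring
  · have hz : (qd : ℂ) + (-pd) * Complex.I ≠ 0 := by
      intro hz0
      have h1 : qd = 0 := by have := congrArg Complex.re hz0; simpa using this
      have h2 : pd = 0 := by have := congrArg Complex.im hz0; simpa using this
      exact h ⟨h2, h1⟩
    set z : ℂ := qd + (-pd) * Complex.I with hzdef
    refine ⟨2 * z.arg, ?_, ?_⟩
    · have hc : Real.cos z.arg = qd / ‖z‖ := by
        rw [Complex.cos_arg hz]; simp [hzdef]
      have hs : Real.sin z.arg = -pd / ‖z‖ := by
        rw [Complex.sin_arg]; simp [hzdef]
      rw [mul_div_cancel_left₀ _ (two_ne_zero), hc, hs]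
      ring
    · have hc : Real.cos z.arg = qd / ‖z‖ := by
        rw [Complex.cos_arg hz]; simp [hzdef]
      have hs : Real.sin z.arg = -pd / ‖z‖ := by
        rw [Complex.sin_arg]; simp [hzdef]
      rw [mul_div_cancel_left₀ _ (two_ne_zero), hc, hs]
      have : -(-pd / ‖z‖ * pmd) + qd / ‖z‖ * qmd =
          (pd * pmd + qd * qmd) / ‖z‖ := by ring
      rw [this, horth, zero_div]
end

section
/- Let P, Q be Laurent polynomials in z = e^{ix/2} with complex coefficients, of degree at most d ≥ 1, both with parity d mod 2, satisfying |P(x)|² + |Q(x)|² = 1 for all real x. Then there exist real θ, φ such that, defining P̂ = cos(θ/2) e^{iφ/2} e^{ix/2} P + sin(θ/2) e^{-iφ/2} e^{ix/2} Q and Q̂ = cos(θ/2) e^{-iφ/2} e^{-ix/2} Q - sin(θ/2) e^{iφ/2} e^{-ix/2} P, the Laurent polynomials P̂ and Q̂ have degree at most d−1, parity (d−1) mod 2, and satisfy |P̂(x)|² + |Q̂(x)|² = 1 for all real x. -/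
open Complex Finset

private lemma expz (x : ℝ) (k : ℤ) :
    Complex.exp (Complex.I * x / 2) ^ k = Complex.exp (Complex.I * k * x / 2) := by
  rw [show Complex.I * (k:ℂ) * x / 2 = (k:ℂ) * (Complex.I * x / 2) by ring, Complex.exp_int_mul]

private lemma inj_exp : Set.InjOn (fun t : ℝ => Complex.exp (Complex.I * t / 2)) (Set.Ioo 0 1) := by
  intro s hs t ht h
  simp only at h
  rw [Complex.exp_eq_exp_iff_exists_int] at h
  obtain ⟨n, hn⟩ := h
  have h2 : (s : ℂ) = (t : ℂ) + n * (4 * Real.pi) := by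
    have hI : Complex.I ≠ 0 := Complex.I_ne_zero
    field_simp at hn
    have : Complex.I * s = Complex.I * (t + n * (4*Real.pi)) := by
      rw [hn]; ring
    exact mul_left_cancel₀ hI this
  have h3 : s = t + n * (4 * Real.pi) := by exact_mod_cast h2
  have hpi := Real.pi_gt_three
  obtain ⟨hs1, hs2⟩ := hs
  obtain ⟨ht1, ht2⟩ := ht
  have hn0 : n = 0 := by
    rcases lt_trichotomy n 0 with h | h | h
    · have hn1 : n ≤ -1 := by omega
      have : (n:ℝ) ≤ -1 := by exact_mod_cast hn1
      nlinarith
    · exact h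
    · have hn1 : 1 ≤ n := by omega
      have : (1:ℝ) ≤ n := by exact_mod_cast hn1
      nlinarith
  rw [hn0] at h3; simpa using h3

private lemma coeff_id (d : ℕ) (hd : 1 ≤ d) (p q : ℤ → ℂ) (P Q : ℝ → ℂ)
    (hP : ∀ x : ℝ, P x = ∑ n ∈ Finset.Icc (-(d : ℤ)) (d : ℤ),
        p n * Complex.exp (Complex.I * (n : ℂ) * (x : ℂ) / 2))
    (hQ : ∀ x : ℝ, Q x = ∑ n ∈ Finset.Icc (-(d : ℤ)) (d : ℤ),
        q n * Complex.exp (Complex.I * (n : ℂ) * (x : ℂ) / 2))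
    (hnorm : ∀ x : ℝ, ‖(P x)‖ ^ 2 + ‖(Q x)‖ ^ 2 = 1) :
    p d * (starRingEnd ℂ) (p (-(d:ℤ))) + q d * (starRingEnd ℂ) (q (-(d:ℤ))) = 0 := by
  set S := Finset.Icc (-(d : ℤ)) (d : ℤ) with hS
  -- step 1 : the double-sum identity
  have key : ∀ x : ℝ, ∑ m ∈ S, ∑ n ∈ S,
      (p m * (starRingEnd ℂ) (p n) + q m * (starRingEnd ℂ) (q n))
        * Complex.exp (Complex.I * x / 2) ^ (m - n) = 1 := by
    intro x
    set E := Complex.exp (Complex.I * x / 2) with hE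
    have hEne : E ≠ 0 := Complex.exp_ne_zero _
    have hconjE : (starRingEnd ℂ) E = E⁻¹ := by
      rw [hE, ← Complex.exp_conj]
      rw [show (starRingEnd ℂ) (Complex.I * x / 2) = -(Complex.I * x / 2) by
        simp [map_div₀, Complex.conj_I, Complex.conj_ofReal, map_ofNat]; ring]
      rw [Complex.exp_neg]
    have h1 : P x * (starRingEnd ℂ) (P x) + Q x * (starRingEnd ℂ) (Q x) = 1 := by
      rw [Complex.mul_conj, Complex.mul_conj]
      have : Complex.normSq (P x) + Complex.normSq (Q x) = 1 := by
        rw [← Complex.sq_norm, ← Complex.sq_norm]; exact hnorm x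
      exact_mod_cast this
    have hPz : P x = ∑ m ∈ S, p m * E ^ m := by
      rw [hP x]; exact Finset.sum_congr rfl fun m _ => by rw [expz]
    have hQz : Q x = ∑ m ∈ S, q m * E ^ m := by
      rw [hQ x]; exact Finset.sum_congr rfl fun m _ => by rw [expz]
    have hconjP : (starRingEnd ℂ) (P x) = ∑ n ∈ S, (starRingEnd ℂ) (p n) * E ^ (-n) := by
      rw [hPz, map_sum]
      refine Finset.sum_congr rfl fun n _ => ?_
      rw [map_mul, map_zpow₀, hconjE, inv_zpow, ← zpow_neg]
    have hconjQ : (starRingEnd ℂ) (Q x) = ∑ n ∈ S, (starRingEnd ℂ) (q n) * E ^ (-n) := by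
      rw [hQz, map_sum]
      refine Finset.sum_congr rfl fun n _ => ?_
      rw [map_mul, map_zpow₀, hconjE, inv_zpow, ← zpow_neg]
    rw [hconjP, hconjQ, hPz, hQz, Finset.sum_mul_sum, Finset.sum_mul_sum] at h1
    rw [← h1, ← Finset.sum_add_distrib]
    refine Finset.sum_congr rfl fun m _ => ?_
    rw [← Finset.sum_add_distrib]
    refine Finset.sum_congr rfl fun n _ => ?_
    rw [show m - n = m + (-n) by ring, zpow_add₀ hEne]
    ring
  -- step 2 : package into a polynomial which vanishes on the unit circle
  set F : Polynomial ℂ := (∑ m ∈ S, ∑ n ∈ S,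
      Polynomial.C (p m * (starRingEnd ℂ) (p n) + q m * (starRingEnd ℂ) (q n))
        * Polynomial.X ^ (m - n + 2*(d:ℤ)).toNat) - Polynomial.X ^ (2*d) with hF
  have heval : ∀ x : ℝ, F.eval (Complex.exp (Complex.I * x / 2)) = 0 := by
    intro x
    set E := Complex.exp (Complex.I * x / 2) with hE
    have hEne : E ≠ 0 := Complex.exp_ne_zero _
    rw [hF]
    simp only [Polynomial.eval_sub, Polynomial.eval_finset_sum, Polynomial.eval_mul,
      Polynomial.eval_pow, Polynomial.eval_C, Polynomial.eval_X]
    have hrw : ∀ m ∈ S, ∀ n ∈ S, E ^ (m - n + 2*(d:ℤ)).toNat = E ^ (m - n) * E ^ (2*d) := by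
      intro m hm n hn
      rw [hS, Finset.mem_Icc] at hm hn
      have hnn : (0:ℤ) ≤ m - n + 2*(d:ℤ) := by omega
      rw [← zpow_natCast E (m - n + 2*(d:ℤ)).toNat, Int.toNat_of_nonneg hnn,
        zpow_add₀ hEne, ← zpow_natCast E (2*d)]
      norm_num
    rw [Finset.sum_congr rfl fun m hm => Finset.sum_congr rfl fun n hn => by
      rw [hrw m hm n hn]]
    have : ∑ m ∈ S, ∑ n ∈ S, (p m * (starRingEnd ℂ) (p n) + q m * (starRingEnd ℂ) (q n))
        * (E ^ (m - n) * E ^ (2*d))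
        = (∑ m ∈ S, ∑ n ∈ S, (p m * (starRingEnd ℂ) (p n) + q m * (starRingEnd ℂ) (q n))
        * E ^ (m - n)) * E ^ (2*d) := by
      rw [Finset.sum_mul]
      refine Finset.sum_congr rfl fun m _ => ?_
      rw [Finset.sum_mul]
      refine Finset.sum_congr rfl fun n _ => by ring
    rw [this, key x, one_mul, sub_self]
  have hF0 : F = 0 := by
    apply Polynomial.eq_zero_of_infinite_isRoot
    have himg : ((fun t : ℝ => Complex.exp (Complex.I * t / 2)) '' (Set.Ioo 0 1)).Infinite :=
      (Set.Ioo_infinite (by norm_num)).image inj_exp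
    refine himg.mono ?_
    rintro z ⟨t, _, rfl⟩
    exact heval t
  -- step 3 : extract the coefficient at 4d
  have hc : F.coeff (4*d) = 0 := by rw [hF0]; simp
  rw [hF] at hc
  rw [Polynomial.coeff_sub, Polynomial.finset_sum_coeff] at hc
  simp only [Polynomial.finset_sum_coeff, Polynomial.coeff_C_mul, Polynomial.coeff_X_pow] at hc
  have hne : ¬ (4*d = 2*d) := by omega
  rw [if_neg hne] at hc
  have hmemd : (d:ℤ) ∈ S := by rw [hS, Finset.mem_Icc]; omega
  have hmemnd : (-(d:ℤ)) ∈ S := by rw [hS, Finset.mem_Icc]; omega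
  rw [Finset.sum_eq_single (d:ℤ)] at hc
  · rw [Finset.sum_eq_single (-(d:ℤ))] at hc
    · rw [if_pos (by omega)] at hc
      simpa using hc
    · intro n hn hne2
      rw [hS, Finset.mem_Icc] at hn
      rw [if_neg (by omega), mul_zero]
    · intro h; exact absurd hmemnd h
  · intro m hm hne2
    rw [hS, Finset.mem_Icc] at hm
    apply Finset.sum_eq_zero
    intro n hn
    rw [hS, Finset.mem_Icc] at hn
    rw [if_neg (by omega), mul_zero]
  · intro h; exact absurd hmemd h

/-- Given `(a,b) ≠ (0,0)`, choose angles killing `(a,b)` on the first condition, such that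
the second condition follows for any `(u,v)` orthogonal in the bilinear sense. -/
private lemma kill (a b : ℂ) (hab : ¬(a = 0 ∧ b = 0)) :
    ∃ θ φ : ℝ,
      ((Real.cos (θ/2) : ℂ) * Complex.exp (Complex.I * (φ:ℂ) / 2) * a
        + (Real.sin (θ/2) : ℂ) * Complex.exp (-(Complex.I * (φ:ℂ)) / 2) * b = 0) ∧
      ∀ u v : ℂ, a * (starRingEnd ℂ) v + b * (starRingEnd ℂ) u = 0 →
        (Real.cos (θ/2) : ℂ) * Complex.exp (-(Complex.I * (φ:ℂ)) / 2) * u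
          - (Real.sin (θ/2) : ℂ) * Complex.exp (Complex.I * (φ:ℂ) / 2) * v = 0 := by
  by_cases ha : a = 0
  · -- then b ≠ 0; take θ = 0
    have hb : b ≠ 0 := fun hb => hab ⟨ha, hb⟩
    refine ⟨0, 0, by simp [ha], ?_⟩
    intro u v h
    rw [ha, zero_mul, zero_add, mul_eq_zero] at h
    rcases h with h | h
    · exact absurd h hb
    · have hu : u = 0 := by simpa using h
      simp [hu]
  · by_cases hb : b = 0
    · refine ⟨Real.pi, 0, by simp [hb, Real.cos_pi_div_two], ?_⟩
      intro u v h
      rw [hb, zero_mul, add_zero, mul_eq_zero] at h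
      rcases h with h | h
      · exact absurd h ha
      · have hv : v = 0 := by simpa using h
        simp [hv, Real.cos_pi_div_two]
    · -- generic case : a ≠ 0, b ≠ 0
      set z0 : ℂ := (‖b‖ : ℂ) + (‖a‖ : ℂ) * Complex.I with hz0def
      have hz0re : z0.re = ‖b‖ := by simp [hz0def]
      have hz0im : z0.im = ‖a‖ := by simp [hz0def]
      have hz0 : z0 ≠ 0 := by
        intro h
        rw [Complex.ext_iff] at h
        have := h.2
        rw [hz0im] at this
        simp only [Complex.zero_im] at this
        exact ha (norm_eq_zero.mp this)
      set N : ℝ := ‖z0‖ with hN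
      have hNpos : 0 < N := norm_pos_iff.mpr hz0
      have hNne : (N:ℂ) ≠ 0 := by exact_mod_cast hNpos.ne'
      set w : ℂ := -(b * (starRingEnd ℂ) a) with hwdef
      refine ⟨2 * Complex.arg z0, Complex.arg w, ?_, ?_⟩
      all_goals
        have hco : Real.cos (2 * Complex.arg z0 / 2) = ‖b‖ / N := by
          rw [show 2 * Complex.arg z0 / 2 = Complex.arg z0 by ring, Complex.cos_arg hz0, hz0re]
        have hsi : Real.sin (2 * Complex.arg z0 / 2) = ‖a‖ / N := by
          rw [show 2 * Complex.arg z0 / 2 = Complex.arg z0 by ring, Complex.sin_arg, hz0im]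
        set X : ℂ := Complex.exp (Complex.I * (Complex.arg w : ℂ) / 2) with hXdef
        set Y : ℂ := Complex.exp (-(Complex.I * (Complex.arg w : ℂ)) / 2) with hYdef
        have hXne : X ≠ 0 := Complex.exp_ne_zero _
        have hXY : X * Y = 1 := by
          rw [hXdef, hYdef, ← Complex.exp_add]
          rw [show Complex.I * (Complex.arg w : ℂ) / 2 + -(Complex.I * (Complex.arg w : ℂ)) / 2 = 0 by ring]
          exact Complex.exp_zero
        have hXX : X * X = Complex.exp ((Complex.arg w : ℂ) * Complex.I) := by
          rw [hXdef, ← Complex.exp_add]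
          congr 1; ring
        have habsw : ‖w‖ = ‖b‖ * ‖a‖ := by
          rw [hwdef]; simp [map_mul]
        have hw' : (‖b‖ : ℂ) * (‖a‖ : ℂ) * (X * X) = -(b * (starRingEnd ℂ) a) := by
          rw [hXX]
          have := Complex.norm_mul_exp_arg_mul_I w
          rw [habsw] at this
          push_cast at this
          rw [← hwdef]
          linear_combination this
        have ha2 : a * (starRingEnd ℂ) a = (‖a‖ : ℂ)^2 := by
          rw [Complex.mul_conj, Complex.normSq_eq_norm_sq]; push_cast; ring
        have hb2 : b * (starRingEnd ℂ) b = (‖b‖ : ℂ)^2 := by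
          rw [Complex.mul_conj, Complex.normSq_eq_norm_sq]; push_cast; ring
        have hAne : (‖a‖ : ℂ) ≠ 0 := by
          exact_mod_cast (norm_ne_zero_iff.mpr ha)
        have hBne : (‖b‖ : ℂ) ≠ 0 := by
          exact_mod_cast (norm_ne_zero_iff.mpr hb)
      · -- first condition
        have key1 : (‖b‖ : ℂ) * (X * X) * a + (‖a‖ : ℂ) * b = 0 := by
          apply mul_left_cancel₀ hAne
          rw [mul_zero]
          linear_combination a * hw' - b * ha2
        have h2 : X * ((‖b‖ : ℂ) * X * a + (‖a‖ : ℂ) * Y * b) = 0 := by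
          linear_combination key1 + ((‖a‖ : ℂ) * b) * hXY
        have h3 : (‖b‖ : ℂ) * X * a + (‖a‖ : ℂ) * Y * b = 0 :=
          (mul_eq_zero.mp h2).resolve_left hXne
        rw [hco, hsi]
        push_cast
        linear_combination (1 / (N:ℂ)) * h3
      · -- second condition
        intro u v h
        have hconj : (starRingEnd ℂ) a * v + (starRingEnd ℂ) b * u = 0 := by
          have := congrArg (starRingEnd ℂ) h
          simpa [map_add, map_mul] using this
        have key2' : (‖b‖ : ℂ) * ((‖b‖ : ℂ) * u - (‖a‖ : ℂ) * (X * X) * v) = 0 := by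
          linear_combination (-v) * hw' + b * hconj - u * hb2
        have key2 : (‖b‖ : ℂ) * u - (‖a‖ : ℂ) * (X * X) * v = 0 :=
          (mul_eq_zero.mp key2').resolve_left hBne
        have h4 : X * ((‖b‖ : ℂ) * Y * u - (‖a‖ : ℂ) * X * v) = 0 := by
          linear_combination key2 + ((‖b‖ : ℂ) * u) * hXY
        have h5 : (‖b‖ : ℂ) * Y * u - (‖a‖ : ℂ) * X * v = 0 :=
          (mul_eq_zero.mp h4).resolve_left hXne
        rw [hco, hsi]
        push_cast
        linear_combination (1 / (N:ℂ)) * h5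

private lemma choose_angles (a b u v : ℂ) (h : a * (starRingEnd ℂ) v + b * (starRingEnd ℂ) u = 0) :
    ∃ θ φ : ℝ,
      ((Real.cos (θ/2) : ℂ) * Complex.exp (Complex.I * (φ:ℂ) / 2) * a
        + (Real.sin (θ/2) : ℂ) * Complex.exp (-(Complex.I * (φ:ℂ)) / 2) * b = 0) ∧
      ((Real.cos (θ/2) : ℂ) * Complex.exp (-(Complex.I * (φ:ℂ)) / 2) * u
        - (Real.sin (θ/2) : ℂ) * Complex.exp (Complex.I * (φ:ℂ) / 2) * v = 0) := by
  by_cases hab : a = 0 ∧ b = 0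
  · by_cases huv : u = 0 ∧ v = 0
    · exact ⟨0, 0, by simp [hab.1, hab.2], by simp [huv.1, huv.2]⟩
    · have hne : ¬(u = 0 ∧ -v = 0) := by
        intro ⟨h1, h2⟩; exact huv ⟨h1, by simpa using h2⟩
      obtain ⟨θ, φ', h1, _⟩ := kill u (-v) hne
      have e1 : Complex.exp (-(Complex.I * ((-φ' : ℝ):ℂ)) / 2) = Complex.exp (Complex.I * (φ':ℂ) / 2) := by
        congr 1; push_cast; ring
      have e2 : Complex.exp (Complex.I * ((-φ' : ℝ):ℂ) / 2) = Complex.exp (-(Complex.I * (φ':ℂ)) / 2) := by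
        congr 1; push_cast; ring
      refine ⟨θ, -φ', by simp [hab.1, hab.2], ?_⟩
      rw [e1, e2]
      linear_combination h1
  · obtain ⟨θ, φ, h1, h2⟩ := kill a b hab
    exact ⟨θ, φ, h1, h2 u v h⟩

private lemma conj_exp_pos (t : ℝ) :
    (starRingEnd ℂ) (Complex.exp (Complex.I * (t:ℂ) / 2)) = Complex.exp (-(Complex.I * (t:ℂ)) / 2) := by
  rw [← Complex.exp_conj]
  congr 1
  simp [map_div₀, map_mul, Complex.conj_I, Complex.conj_ofReal, map_ofNat]

private lemma conj_exp_neg (t : ℝ) :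
    (starRingEnd ℂ) (Complex.exp (-(Complex.I * (t:ℂ)) / 2)) = Complex.exp (Complex.I * (t:ℂ) / 2) := by
  rw [← Complex.exp_conj]
  congr 1
  simp [map_div₀, map_mul, Complex.conj_I, Complex.conj_ofReal, map_ofNat]

/-- degree-reduction step. If `P, Q` are complex Laurent polynomials in
`e^{ix/2}` of degree at most `d ≥ 1`, parity `d mod 2`, with `|P|² + |Q|² = 1` on ℝ, then
for some real `θ, φ` the functions
`P̂ = cos(θ/2) e^{iφ/2} e^{ix/2} P + sin(θ/2) e^{-iφ/2} e^{ix/2} Q` and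
`Q̂ = cos(θ/2) e^{-iφ/2} e^{-ix/2} Q − sin(θ/2) e^{iφ/2} e^{-ix/2} P`
are Laurent polynomials of degree at most `d−1`, parity `(d−1) mod 2`, with
`|P̂|² + |Q̂|² = 1` on ℝ. -/
theorem stmt7 (d : ℕ) (hd : 1 ≤ d) (p q : ℤ → ℂ) (P Q : ℝ → ℂ)
    (hP : ∀ x : ℝ, P x = ∑ n ∈ Finset.Icc (-(d : ℤ)) (d : ℤ),
        p n * Complex.exp (Complex.I * (n : ℂ) * (x : ℂ) / 2))
    (hQ : ∀ x : ℝ, Q x = ∑ n ∈ Finset.Icc (-(d : ℤ)) (d : ℤ),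
        q n * Complex.exp (Complex.I * (n : ℂ) * (x : ℂ) / 2))
    (hpdeg : ∀ n : ℤ, (d : ℤ) < |n| → p n = 0)
    (hqdeg : ∀ n : ℤ, (d : ℤ) < |n| → q n = 0)
    (hppar : ∀ n : ℤ, n % 2 ≠ (d : ℤ) % 2 → p n = 0)
    (hqpar : ∀ n : ℤ, n % 2 ≠ (d : ℤ) % 2 → q n = 0)
    (hnorm : ∀ x : ℝ, ‖P x‖ ^ 2 + ‖Q x‖ ^ 2 = 1) :
    ∃ θ φ : ℝ, ∃ ph qh : ℤ → ℂ,
      (∀ n : ℤ, (d : ℤ) - 1 < |n| → ph n = 0) ∧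
      (∀ n : ℤ, (d : ℤ) - 1 < |n| → qh n = 0) ∧
      (∀ n : ℤ, n % 2 ≠ ((d : ℤ) - 1) % 2 → ph n = 0) ∧
      (∀ n : ℤ, n % 2 ≠ ((d : ℤ) - 1) % 2 → qh n = 0) ∧
      (∀ x : ℝ,
        (Real.cos (θ / 2) : ℂ) * Complex.exp (Complex.I * (φ : ℂ) / 2) *
            Complex.exp (Complex.I * (x : ℂ) / 2) * P x +
          (Real.sin (θ / 2) : ℂ) * Complex.exp (-(Complex.I * (φ : ℂ)) / 2) *
            Complex.exp (Complex.I * (x : ℂ) / 2) * Q x =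
        ∑ n ∈ Finset.Icc (-((d : ℤ) - 1)) ((d : ℤ) - 1),
          ph n * Complex.exp (Complex.I * (n : ℂ) * (x : ℂ) / 2)) ∧
      (∀ x : ℝ,
        (Real.cos (θ / 2) : ℂ) * Complex.exp (-(Complex.I * (φ : ℂ)) / 2) *
            Complex.exp (-(Complex.I * (x : ℂ)) / 2) * Q x -
          (Real.sin (θ / 2) : ℂ) * Complex.exp (Complex.I * (φ : ℂ) / 2) *
            Complex.exp (-(Complex.I * (x : ℂ)) / 2) * P x =
        ∑ n ∈ Finset.Icc (-((d : ℤ) - 1)) ((d : ℤ) - 1),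
          qh n * Complex.exp (Complex.I * (n : ℂ) * (x : ℂ) / 2)) ∧
      (∀ x : ℝ,
        ‖(Real.cos (θ / 2) : ℂ) * Complex.exp (Complex.I * (φ : ℂ) / 2) *
              Complex.exp (Complex.I * (x : ℂ) / 2) * P x +
            (Real.sin (θ / 2) : ℂ) * Complex.exp (-(Complex.I * (φ : ℂ)) / 2) *
              Complex.exp (Complex.I * (x : ℂ) / 2) * Q x‖ ^ 2 +
          ‖(Real.cos (θ / 2) : ℂ) * Complex.exp (-(Complex.I * (φ : ℂ)) / 2) *
              Complex.exp (-(Complex.I * (x : ℂ)) / 2) * Q x -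
            (Real.sin (θ / 2) : ℂ) * Complex.exp (Complex.I * (φ : ℂ) / 2) *
              Complex.exp (-(Complex.I * (x : ℂ)) / 2) * P x‖ ^ 2 = 1) := by
  have hdz : (1:ℤ) ≤ (d:ℤ) := by exact_mod_cast hd
  obtain ⟨θ, φ, hc1, hc2⟩ := choose_angles (p d) (q d) (q (-(d:ℤ))) (p (-(d:ℤ)))
    (coeff_id d hd p q P Q hP hQ hnorm)
  set c : ℂ := (Real.cos (θ/2) : ℂ) with hcdef
  set s : ℂ := (Real.sin (θ/2) : ℂ) with hsdef
  set X : ℂ := Complex.exp (Complex.I * (φ:ℂ) / 2) with hXdef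
  set Y : ℂ := Complex.exp (-(Complex.I * (φ:ℂ)) / 2) with hYdef
  set ph : ℤ → ℂ := fun n => c * X * p (n-1) + s * Y * q (n-1) with hphdef
  set qh : ℤ → ℂ := fun n => c * Y * q (n+1) - s * X * p (n+1) with hqhdef
  have hphdeg : ∀ n : ℤ, (d : ℤ) - 1 < |n| → ph n = 0 := by
    intro n hn
    rcases lt_abs.mp hn with h | h
    · -- n ≥ d
      by_cases h1 : n = (d:ℤ)
      · have hp0 : p (n-1) = 0 := hppar _ (by omega)
        have hq0 : q (n-1) = 0 := hqpar _ (by omega)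
        simp [hphdef, hp0, hq0]
      · by_cases h2 : n = (d:ℤ) + 1
        · have : ph n = c * X * p d + s * Y * q d := by rw [hphdef]; simp [h2]
          rw [this]; exact hc1
        · have hp0 : p (n-1) = 0 := hpdeg _ (by rw [_root_.abs_of_nonneg (by omega)]; omega)
          have hq0 : q (n-1) = 0 := hqdeg _ (by rw [_root_.abs_of_nonneg (by omega)]; omega)
          simp [hphdef, hp0, hq0]
    · -- n ≤ -d
      have hp0 : p (n-1) = 0 := hpdeg _ (by rw [_root_.abs_of_nonpos (by omega)]; omega)
      have hq0 : q (n-1) = 0 := hqdeg _ (by rw [_root_.abs_of_nonpos (by omega)]; omega)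
      simp [hphdef, hp0, hq0]
  have hqhdeg : ∀ n : ℤ, (d : ℤ) - 1 < |n| → qh n = 0 := by
    intro n hn
    rcases lt_abs.mp hn with h | h
    · -- n ≥ d
      have hp0 : p (n+1) = 0 := hpdeg _ (by rw [_root_.abs_of_nonneg (by omega)]; omega)
      have hq0 : q (n+1) = 0 := hqdeg _ (by rw [_root_.abs_of_nonneg (by omega)]; omega)
      simp [hqhdef, hp0, hq0]
    · -- n ≤ -d
      by_cases h1 : n = -(d:ℤ)
      · have hp0 : p (n+1) = 0 := hppar _ (by omega)
        have hq0 : q (n+1) = 0 := hqpar _ (by omega)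
        simp [hqhdef, hp0, hq0]
      · by_cases h2 : n = -(d:ℤ) - 1
        · have : qh n = c * Y * q (-(d:ℤ)) - s * X * p (-(d:ℤ)) := by
            rw [hqhdef]; simp [h2]
          rw [this]; exact hc2
        · have hp0 : p (n+1) = 0 := hpdeg _ (by rw [_root_.abs_of_nonpos (by omega)]; omega)
          have hq0 : q (n+1) = 0 := hqdeg _ (by rw [_root_.abs_of_nonpos (by omega)]; omega)
          simp [hqhdef, hp0, hq0]
  have hphpar : ∀ n : ℤ, n % 2 ≠ ((d : ℤ) - 1) % 2 → ph n = 0 := by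
    intro n hn
    have hp0 : p (n-1) = 0 := hppar _ (by omega)
    have hq0 : q (n-1) = 0 := hqpar _ (by omega)
    simp [hphdef, hp0, hq0]
  have hqhpar : ∀ n : ℤ, n % 2 ≠ ((d : ℤ) - 1) % 2 → qh n = 0 := by
    intro n hn
    have hp0 : p (n+1) = 0 := hppar _ (by omega)
    have hq0 : q (n+1) = 0 := hqpar _ (by omega)
    simp [hqhdef, hp0, hq0]
  refine ⟨θ, φ, ph, qh, hphdeg, hqhdeg, hphpar, hqhpar, ?_, ?_, ?_⟩
  · -- P̂ sum identity
    intro x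
    have step1 : ∑ n ∈ Finset.Icc (-((d:ℤ)-1)) ((d:ℤ)-1),
          ph n * Complex.exp (Complex.I * (n:ℂ) * (x:ℂ) / 2)
        = ∑ n ∈ Finset.Icc (-(d:ℤ) + 1) ((d:ℤ) + 1),
          ph n * Complex.exp (Complex.I * (n:ℂ) * (x:ℂ) / 2) := by
      apply Finset.sum_subset
      · intro n hn
        rw [Finset.mem_Icc] at hn ⊢; omega
      · intro n hn hns
        rw [Finset.mem_Icc] at hn
        rw [Finset.mem_Icc] at hns
        have : ph n = 0 := hphdeg n (by rw [_root_.abs_of_nonneg (by omega)]; omega)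
        rw [this, zero_mul]
    have step2 : ∑ n ∈ Finset.Icc (-(d:ℤ) + 1) ((d:ℤ) + 1),
          ph n * Complex.exp (Complex.I * (n:ℂ) * (x:ℂ) / 2)
        = ∑ m ∈ Finset.Icc (-(d:ℤ)) (d:ℤ),
          ph (m+1) * Complex.exp (Complex.I * ((m+1 : ℤ):ℂ) * (x:ℂ) / 2) := by
      rw [← Finset.map_add_right_Icc, Finset.sum_map]
      simp [addRightEmbedding]
    rw [step1, step2, hP x, hQ x, Finset.mul_sum, Finset.mul_sum, ← Finset.sum_add_distrib]
    refine Finset.sum_congr rfl fun m hm => ?_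
    have hexp : Complex.exp (Complex.I * ((m+1 : ℤ):ℂ) * (x:ℂ) / 2)
        = Complex.exp (Complex.I * (x:ℂ) / 2) * Complex.exp (Complex.I * (m:ℂ) * (x:ℂ) / 2) := by
      rw [← Complex.exp_add]; congr 1; push_cast; ring
    have hphm : ph (m+1) = c * X * p m + s * Y * q m := by
      rw [hphdef]; simp
    rw [hphm, hexp]
    ring
  · -- Q̂ sum identity
    intro x
    have step1 : ∑ n ∈ Finset.Icc (-((d:ℤ)-1)) ((d:ℤ)-1),
          qh n * Complex.exp (Complex.I * (n:ℂ) * (x:ℂ) / 2)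
        = ∑ n ∈ Finset.Icc (-(d:ℤ) + -1) ((d:ℤ) + -1),
          qh n * Complex.exp (Complex.I * (n:ℂ) * (x:ℂ) / 2) := by
      apply Finset.sum_subset
      · intro n hn
        rw [Finset.mem_Icc] at hn ⊢; omega
      · intro n hn hns
        rw [Finset.mem_Icc] at hn
        rw [Finset.mem_Icc] at hns
        have : qh n = 0 := hqhdeg n (by rw [_root_.abs_of_nonpos (by omega)]; omega)
        rw [this, zero_mul]
    have step2 : ∑ n ∈ Finset.Icc (-(d:ℤ) + -1) ((d:ℤ) + -1),
          qh n * Complex.exp (Complex.I * (n:ℂ) * (x:ℂ) / 2)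
        = ∑ m ∈ Finset.Icc (-(d:ℤ)) (d:ℤ),
          qh (m + -1) * Complex.exp (Complex.I * ((m + -1 : ℤ):ℂ) * (x:ℂ) / 2) := by
      rw [← Finset.map_add_right_Icc, Finset.sum_map]
      simp [addRightEmbedding]
    rw [step1, step2, hP x, hQ x, Finset.mul_sum, Finset.mul_sum, ← Finset.sum_sub_distrib]
    refine Finset.sum_congr rfl fun m hm => ?_
    have hexp : Complex.exp (Complex.I * ((m + -1 : ℤ):ℂ) * (x:ℂ) / 2)
        = Complex.exp (-(Complex.I * (x:ℂ)) / 2) * Complex.exp (Complex.I * (m:ℂ) * (x:ℂ) / 2) := by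
      rw [← Complex.exp_add]; congr 1; push_cast; ring
    have hqhm : qh (m + -1) = c * Y * q m - s * X * p m := by
      rw [hqhdef]; simp
    rw [hqhm, hexp]
    ring
  · -- norm identity
    intro x
    set Ex : ℂ := Complex.exp (Complex.I * (x:ℂ) / 2) with hExdef
    set Ex' : ℂ := Complex.exp (-(Complex.I * (x:ℂ)) / 2) with hExdef'
    have hcs : c^2 + s^2 = 1 := by
      rw [hcdef, hsdef]
      have : (Real.cos (θ/2))^2 + (Real.sin (θ/2))^2 = 1 := by
        rw [add_comm]; exact Real.sin_sq_add_cos_sq _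
      exact_mod_cast this
    have hXY : X * Y = 1 := by
      rw [hXdef, hYdef, ← Complex.exp_add,
        show Complex.I * (φ:ℂ) / 2 + -(Complex.I * (φ:ℂ)) / 2 = 0 by ring, Complex.exp_zero]
    have hEE : Ex * Ex' = 1 := by
      rw [hExdef, hExdef', ← Complex.exp_add,
        show Complex.I * (x:ℂ) / 2 + -(Complex.I * (x:ℂ)) / 2 = 0 by ring, Complex.exp_zero]
    have hcX : (starRingEnd ℂ) X = Y := conj_exp_pos φ
    have hcY : (starRingEnd ℂ) Y = X := conj_exp_neg φ
    have hcEx : (starRingEnd ℂ) Ex = Ex' := conj_exp_pos x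
    have hcEx' : (starRingEnd ℂ) Ex' = Ex := conj_exp_neg x
    have hcc : (starRingEnd ℂ) c = c := by rw [hcdef]; exact Complex.conj_ofReal _
    have hcss : (starRingEnd ℂ) s = s := by rw [hsdef]; exact Complex.conj_ofReal _
    have hPQ : P x * (starRingEnd ℂ) (P x) + Q x * (starRingEnd ℂ) (Q x) = 1 := by
      rw [Complex.mul_conj, Complex.mul_conj]
      have : Complex.normSq (P x) + Complex.normSq (Q x) = 1 := by
        rw [← Complex.sq_norm, ← Complex.sq_norm]; exact hnorm x
      exact_mod_cast this
    set A : ℂ := c * X * Ex * P x + s * Y * Ex * Q x with hAdef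
    set B : ℂ := c * Y * Ex' * Q x - s * X * Ex' * P x with hBdef
    have habs : ∀ z : ℂ, ‖z‖ ^ 2 = (z * (starRingEnd ℂ) z).re := by
      intro z; rw [Complex.mul_conj, Complex.sq_norm]; simp
    have hconjA : (starRingEnd ℂ) A
        = c * Y * Ex' * (starRingEnd ℂ) (P x) + s * X * Ex' * (starRingEnd ℂ) (Q x) := by
      rw [hAdef]
      simp only [map_add, map_mul, hcc, hcss, hcX, hcY, hcEx]
    have hconjB : (starRingEnd ℂ) B
        = c * X * Ex * (starRingEnd ℂ) (Q x) - s * Y * Ex * (starRingEnd ℂ) (P x) := by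
      rw [hBdef]
      simp only [map_sub, map_mul, hcc, hcss, hcX, hcY, hcEx']
    have H : A * (starRingEnd ℂ) A + B * (starRingEnd ℂ) B = 1 := by
      rw [hconjA, hconjB, hAdef, hBdef]
      linear_combination (Ex * Ex' * (c^2 + s^2)
          * (P x * (starRingEnd ℂ) (P x) + Q x * (starRingEnd ℂ) (Q x))) * hXY
        + ((c^2 + s^2) * (P x * (starRingEnd ℂ) (P x) + Q x * (starRingEnd ℂ) (Q x))) * hEE
        + (P x * (starRingEnd ℂ) (P x) + Q x * (starRingEnd ℂ) (Q x)) * hcs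
        + hPQ
    calc ‖A‖ ^ 2 + ‖B‖ ^ 2
        = (A * (starRingEnd ℂ) A).re + (B * (starRingEnd ℂ) B).re := by rw [habs, habs]
      _ = (A * (starRingEnd ℂ) A + B * (starRingEnd ℂ) B).re := by rw [Complex.add_re]
      _ = 1 := by rw [H]; simp
end

section
/- Let f : [-π, π] → [-1, 1] be a square-integrable even function and ε > 0. Then there exist N ∈ ℕ, real coefficients a₀, ..., a_N, and a trigonometric polynomial g(x) = a₀ + Σ_{n=1}^{N} a_n cos(nx) with |g(x)| ≤ 1 for all x, such that the function x ↦ 2 g(x)² − 1 satisfies ‖2g² − 1 − f‖_{L²([-π,π])} ≤ ε. -/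
open Real Finset

lemma cos_pow_cp (k : ℕ) : ∃ a : ℕ → ℝ, ∀ x : ℝ,
    Real.cos x ^ k = ∑ n ∈ Finset.range (k+1), a n * Real.cos (n * x) := by
  induction k with
  | zero => exact ⟨fun _ => 1, fun x => by simp⟩
  | succ k ih =>
    obtain ⟨a, ha⟩ := ih
    refine ⟨fun m => (if m = 0 then 0 else a (m-1)/2) + (if m < k then a (m+1)/2 else 0)
      + (if m = 1 then a 0/2 else 0), fun x => ?_⟩
    have key : ∀ n : ℕ, Real.cos x * Real.cos (n * x)
        = Real.cos ((n+1 : ℕ) * x) / 2 + Real.cos (((n : ℝ) - 1) * x) / 2 := by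
      intro n
      have hmm := two_mul_cos_mul_cos x ((n : ℝ) * x)
      have e1 : x - (n:ℝ)*x = (1 - (n:ℝ)) * x := by ring
      have e2 : x + (n:ℝ)*x = ((n:ℕ) + 1 : ℕ) * x := by push_cast; ring
      rw [e1, e2] at hmm
      have e3 : Real.cos ((1 - (n:ℝ)) * x) = Real.cos (((n:ℝ) - 1) * x) := by
        rw [← Real.cos_neg]; ring_nf
      rw [e3] at hmm
      linarith
    calc Real.cos x ^ (k+1) = Real.cos x * Real.cos x ^ k := by ring
      _ = ∑ n ∈ range (k+1), a n * (Real.cos x * Real.cos (n * x)) := by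
          rw [ha x, Finset.mul_sum]; exact Finset.sum_congr rfl fun n _ => by ring
      _ = (∑ n ∈ range (k+1), a n / 2 * Real.cos ((n+1 : ℕ) * x))
          + ∑ n ∈ range (k+1), a n / 2 * Real.cos (((n:ℝ) - 1) * x) := by
          rw [← Finset.sum_add_distrib]
          exact Finset.sum_congr rfl fun n _ => by rw [key n]; ring
      _ = _ := by
          have hS1 : ∑ m ∈ range (k+2), (if m = 0 then (0:ℝ) else a (m-1)/2) * Real.cos (m * x)
              = ∑ n ∈ range (k+1), a n / 2 * Real.cos ((n+1 : ℕ) * x) := by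
            rw [Finset.sum_range_succ'
              (fun m => (if m = 0 then (0:ℝ) else a (m-1)/2) * Real.cos (m * x)) (k+1)]
            simp only [if_neg (Nat.succ_ne_zero _), if_true, Nat.add_sub_cancel,
              zero_mul, add_zero, eq_self_iff_true]
          have hS2 : ∑ m ∈ range (k+2), (if m < k then a (m+1)/2 else (0:ℝ)) * Real.cos (m * x)
              = ∑ m ∈ range k, a (m+1) / 2 * Real.cos (m * x) := by
            rw [← Finset.sum_subset (Finset.range_subset_range.2 (by omega : k ≤ k+2))
              (fun m _ hm => by rw [if_neg (by simpa using hm), zero_mul])]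
            exact Finset.sum_congr rfl fun m hm => by rw [if_pos (Finset.mem_range.1 hm)]
          have hS3 : ∑ m ∈ range (k+2), (if m = 1 then a 0/2 else (0:ℝ)) * Real.cos (m * x)
              = a 0 / 2 * Real.cos x := by
            simp only [ite_mul, zero_mul]
            rw [Finset.sum_ite_eq' (range (k+2)) 1 (fun m => a 0/2 * Real.cos (m * x))]
            simp
          have hL2 : ∑ n ∈ range (k+1), a n / 2 * Real.cos (((n:ℝ) - 1) * x)
              = ∑ n ∈ range k, a (n+1) / 2 * Real.cos (n * x) + a 0 / 2 * Real.cos x := by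
            rw [Finset.sum_range_succ'
              (fun n => a n / 2 * Real.cos (((n:ℝ) - 1) * x)) k]
            congr 1
            · exact Finset.sum_congr rfl fun n _ => by push_cast; ring_nf
            · norm_num
          simp only [add_mul, Finset.sum_add_distrib, hS1, hS2, hS3, hL2]
          ring

lemma poly_cp (p : Polynomial ℝ) : ∃ (N : ℕ) (a : ℕ → ℝ), ∀ x : ℝ,
    p.eval (Real.cos x) = a 0 + ∑ n ∈ Finset.Icc 1 N, a n * Real.cos (n * x) := by
  classical
  choose c hc using cos_pow_cp
  set d := p.natDegree with hd
  set C : ℕ → ℕ → ℝ := fun i n => if n ∈ Finset.range (i+1) then c i n else 0 with hC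
  have hpad : ∀ i, i ≤ d → ∀ x : ℝ, Real.cos x ^ i
      = ∑ n ∈ Finset.range (d+1), C i n * Real.cos (n * x) := by
    intro i hi x
    rw [hc i x]
    refine (Finset.sum_congr rfl fun n hn => ?_).trans
      (Finset.sum_subset (Finset.range_subset_range.2 (by omega : i+1 ≤ d+1))
        (fun n _ hn => by simp [hC, Finset.mem_range.not.mp hn]; intro h; exfalso; simp at hn; omega))
    simp [hC, Finset.mem_range.1 hn]; intro h; exfalso; simp at hn; omega
  set A : ℕ → ℝ := fun n => ∑ i ∈ Finset.range (d+1), p.coeff i * C i n with hA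
  refine ⟨d, A, fun x => ?_⟩
  have h1 : p.eval (Real.cos x) = ∑ i ∈ Finset.range (d+1),
      p.coeff i * Real.cos x ^ i := Polynomial.eval_eq_sum_range (Real.cos x)
  have h2 : p.eval (Real.cos x) = ∑ n ∈ Finset.range (d+1), A n * Real.cos (n * x) := by
    rw [h1]
    calc ∑ i ∈ Finset.range (d+1), p.coeff i * Real.cos x ^ i
        = ∑ i ∈ Finset.range (d+1), ∑ n ∈ Finset.range (d+1),
            (p.coeff i * C i n) * Real.cos (n * x) := by
          refine Finset.sum_congr rfl fun i hi => ?_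
          rw [hpad i (Nat.lt_succ_iff.mp (Finset.mem_range.1 hi)) x, Finset.mul_sum]
          exact Finset.sum_congr rfl fun n _ => by ring
      _ = ∑ n ∈ Finset.range (d+1), A n * Real.cos (n * x) := by
          rw [Finset.sum_comm]
          refine Finset.sum_congr rfl fun n _ => ?_
          rw [hA]; simp only []
          rw [Finset.sum_mul]
  rw [h2, show Finset.range (d+1) = insert 0 (Finset.Icc 1 d) by
    ext m; simp [Finset.mem_range, Finset.mem_Icc]; omega]
  rw [Finset.sum_insert (by simp)]
  norm_num

open MeasureTheory
open scoped ENNReal NNReal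

lemma clip_close {t u : ℝ} (h0 : 0 ≤ u) (h1 : u ≤ 1) :
    |max 0 (min 1 t) - u| ≤ |t - u| := by
  rcases le_total t 0 with ht | ht
  · rw [min_eq_right (ht.trans zero_le_one), max_eq_left ht,
      abs_of_nonpos (by linarith), abs_of_nonpos (by linarith)]
    linarith
  · rcases le_total 1 t with ht1 | ht1
    · rw [min_eq_left ht1, max_eq_right zero_le_one,
        abs_of_nonneg (by linarith), abs_of_nonneg (by linarith)]
      linarith
    · rw [min_eq_right ht1, max_eq_right ht]

lemma neg_Icc_preimage : (fun x : ℝ => -x) ⁻¹' (Set.Icc (-π) π) = Set.Icc (-π) π := by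
  ext x
  simp only [Set.mem_preimage, Set.mem_Icc]
  constructor <;> rintro ⟨h1, h2⟩ <;> constructor <;> linarith

lemma neg_mp : MeasurePreserving (fun x : ℝ => -x)
    (volume.restrict (Set.Icc (-π) π)) (volume.restrict (Set.Icc (-π) π)) := by
  refine ⟨measurable_neg, ?_⟩
  have : (fun x : ℝ => -x) = Neg.neg := rfl
  rw [this, ← neg_Icc_preimage, ← Measure.restrict_map measurable_neg measurableSet_Icc,
    Measure.map_neg_eq_self (volume : Measure ℝ), neg_Icc_preimage]

/-- for any even square-integrable `f : [-π, π] → [-1, 1]` and `ε > 0`, there is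
a cosine polynomial `g(x) = a₀ + Σ_{n=1}^N a_n cos(nx)` with `|g| ≤ 1` such that
`‖2g² − 1 − f‖_{L²([-π,π])} ≤ ε`. -/
theorem stmt12 (f : ℝ → ℝ) (ε : ℝ) (hε : 0 < ε)
    (hmap : ∀ x ∈ Set.Icc (-π) π, f x ∈ Set.Icc (-1 : ℝ) 1)
    (heven : ∀ x : ℝ, f (-x) = f x)
    (hL2 : MemLp f 2 (volume.restrict (Set.Icc (-π) π))) :
    ∃ (N : ℕ) (a : ℕ → ℝ),
      (∀ x : ℝ, |a 0 + ∑ n ∈ Finset.Icc 1 N, a n * Real.cos (n * x)| ≤ 1) ∧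
      eLpNorm
          (fun x : ℝ =>
            2 * (a 0 + ∑ n ∈ Finset.Icc 1 N, a n * Real.cos (n * x)) ^ 2 - 1 - f x)
          2 (volume.restrict (Set.Icc (-π) π)) ≤ ENNReal.ofReal ε := by
  classical
  set μ := volume.restrict (Set.Icc (-π) π) with hμ
  have hIccTop : volume (Set.Icc (-π) π) ≠ ⊤ := by
    rw [Real.volume_Icc]; exact ENNReal.ofReal_ne_top
  have hμuniv : μ Set.univ = ENNReal.ofReal (2 * π) := by
    rw [hμ, Measure.restrict_apply_univ, Real.volume_Icc]
    norm_num; ring_nf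
    rw [ENNReal.ofReal_mul' (by norm_num), ENNReal.ofReal_ofNat]
  have hfin : IsFiniteMeasure μ := by
    constructor; rw [hμuniv]; exact ENNReal.ofReal_lt_top
  have hreg : μ.Regular := by
    rw [hμ]; exact Measure.Regular.restrict_of_measure_ne_top hIccTop
  have hae_mem : ∀ᵐ x ∂μ, x ∈ Set.Icc (-π) π := ae_restrict_mem measurableSet_Icc
  -- the square root function
  set h : ℝ → ℝ := fun x => Real.sqrt ((1 + f x) / 2) with hh
  have hheven : ∀ x, h (-x) = h x := fun x => by rw [hh]; simp [heven]
  have hhmeas : AEStronglyMeasurable h μ := by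
    exact (Real.continuous_sqrt.comp
      ((continuous_const.add continuous_id).div_const 2)).comp_aestronglyMeasurable hL2.1
  have hh01 : ∀ x ∈ Set.Icc (-π) π, 0 ≤ h x ∧ h x ≤ 1 := by
    intro x hx
    obtain ⟨hf1, hf2⟩ := hmap x hx
    exact ⟨Real.sqrt_nonneg _, Real.sqrt_le_one.mpr (by linarith)⟩
  have hhf : ∀ x ∈ Set.Icc (-π) π, 2 * h x ^ 2 - 1 = f x := by
    intro x hx
    obtain ⟨hf1, hf2⟩ := hmap x hx
    rw [hh]
    simp only []
    rw [Real.sq_sqrt (by linarith)]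
    ring
  have hhmem : MemLp h 2 μ := by
    refine MemLp.of_bound hhmeas 1 ?_
    filter_upwards [hae_mem] with x hx
    rw [Real.norm_eq_abs, abs_of_nonneg (hh01 x hx).1]
    exact (hh01 x hx).2
  -- continuous approximation
  have hε16 : (0:ℝ) < ε / 16 := by linarith
  obtain ⟨φ, -, hφ_close, hφ_cont, -⟩ :=
    hhmem.exists_hasCompactSupport_eLpNorm_sub_le (by norm_num : (2 : ℝ≥0∞) ≠ ⊤)
      (ε := ENNReal.ofReal (ε/16)) (by simp [ENNReal.ofReal_eq_zero]; linarith)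
  -- clip to [0,1]
  set φ1 : ℝ → ℝ := fun x => max 0 (min 1 (φ x)) with hφ1
  have hφ1_cont : Continuous φ1 :=
    continuous_const.max (continuous_const.min hφ_cont)
  have hφ1_01 : ∀ x, 0 ≤ φ1 x ∧ φ1 x ≤ 1 := fun x =>
    ⟨le_max_left _ _, max_le (by norm_num) (min_le_left _ _)⟩
  have hφ1_close : eLpNorm (h - φ1) 2 μ ≤ ENNReal.ofReal (ε/16) := by
    refine le_trans (eLpNorm_mono_ae ?_) hφ_close
    filter_upwards [hae_mem] with x hx
    rw [Real.norm_eq_abs, Real.norm_eq_abs, Pi.sub_apply, Pi.sub_apply,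
      abs_sub_comm (h x) (φ1 x), abs_sub_comm (h x) (φ x)]
    exact clip_close (hh01 x hx).1 (hh01 x hx).2
  -- symmetrize
  set φ2 : ℝ → ℝ := fun x => (φ1 x + φ1 (-x)) / 2 with hφ2
  have hφ2_cont : Continuous φ2 := by
    exact ((hφ1_cont.add (hφ1_cont.comp continuous_neg)).div_const 2)
  have hφ2_even : ∀ x, φ2 (-x) = φ2 x := fun x => by rw [hφ2]; simp; ring
  have hφ2_01 : ∀ x, 0 ≤ φ2 x ∧ φ2 x ≤ 1 := by
    intro x
    obtain ⟨a1, a2⟩ := hφ1_01 x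
    obtain ⟨b1, b2⟩ := hφ1_01 (-x)
    constructor <;> [positivity; · rw [hφ2]; simp only []; linarith]
  have hφ2_close : eLpNorm (h - φ2) 2 μ ≤ ENNReal.ofReal (ε/16) := by
    have hFaesm : AEStronglyMeasurable (h - φ1) μ :=
      hhmeas.sub hφ1_cont.aestronglyMeasurable
    have hFneg : AEStronglyMeasurable ((h - φ1) ∘ (fun x : ℝ => -x)) μ :=
      hFaesm.comp_measurePreserving neg_mp
    have heq : (h - φ2) = (2⁻¹ : ℝ) • ((h - φ1) + (h - φ1) ∘ (fun x : ℝ => -x)) := by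
      funext x
      simp only [Pi.sub_apply, Pi.smul_apply, Pi.add_apply, Function.comp_apply,
        smul_eq_mul, hφ2, hheven]
      ring
    rw [heq, eLpNorm_const_smul]
    have htri : eLpNorm ((h - φ1) + (h - φ1) ∘ (fun x : ℝ => -x)) 2 μ
        ≤ eLpNorm (h - φ1) 2 μ + eLpNorm ((h - φ1) ∘ (fun x : ℝ => -x)) 2 μ :=
      eLpNorm_add_le hFaesm hFneg one_le_two
    have hcomp : eLpNorm ((h - φ1) ∘ (fun x : ℝ => -x)) 2 μ = eLpNorm (h - φ1) 2 μ :=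
      eLpNorm_comp_measurePreserving hFaesm neg_mp
    rw [hcomp] at htri
    have hnn : ((‖(2⁻¹ : ℝ)‖₊ : ℝ≥0) : ℝ≥0∞) = 2⁻¹ := by
      norm_num [Real.nnnorm_of_nonneg]
    calc (‖(2⁻¹ : ℝ)‖₊ : ℝ≥0) • eLpNorm ((h - φ1) + (h - φ1) ∘ (fun x : ℝ => -x)) 2 μ
        = (2⁻¹ : ℝ≥0∞) * eLpNorm ((h - φ1) + (h - φ1) ∘ (fun x : ℝ => -x)) 2 μ := by
          rw [ENNReal.smul_def, smul_eq_mul, hnn]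
      _ ≤ (2⁻¹ : ℝ≥0∞) * (eLpNorm (h - φ1) 2 μ + eLpNorm (h - φ1) 2 μ) :=
          mul_le_mul_right htri _
      _ = eLpNorm (h - φ1) 2 μ := by
          rw [← two_mul, ← mul_assoc, ENNReal.inv_mul_cancel two_ne_zero ENNReal.ofNat_ne_top,
            one_mul]
      _ ≤ ENNReal.ofReal (ε/16) := hφ1_close
  -- Weierstrass
  set δ : ℝ := ε / 96 with hδ
  have hδpos : 0 < δ := by rw [hδ]; linarith
  obtain ⟨p, hp⟩ := exists_polynomial_near_of_continuousOn (-1) 1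
    (fun t => φ2 (Real.arccos t))
    ((hφ2_cont.comp Real.continuous_arccos).continuousOn) δ hδpos
  have hψcos : ∀ x ∈ Set.Icc (-π) π, φ2 (Real.arccos (Real.cos x)) = φ2 x := by
    intro x hx
    rcases le_total 0 x with hx0 | hx0
    · rw [Real.arccos_cos hx0 hx.2]
    · rw [← Real.cos_neg, Real.arccos_cos (by linarith) (by linarith [hx.1]), hφ2_even]
  have hpb : ∀ t ∈ Set.Icc (-1:ℝ) 1, |p.eval t| ≤ 1 + δ := by
    intro t ht
    have h1 := hp t ht
    have h2 := hφ2_01 (Real.arccos t)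
    calc |p.eval t| ≤ |p.eval t - φ2 (Real.arccos t)| + |φ2 (Real.arccos t)| := by
          have := abs_add_le (p.eval t - φ2 (Real.arccos t)) (φ2 (Real.arccos t))
          simpa using this
      _ ≤ δ + 1 := add_le_add h1.le (by rw [abs_of_nonneg h2.1]; exact h2.2)
      _ = 1 + δ := by ring
  set q : Polynomial ℝ := p * Polynomial.C (1/(1+δ)) with hq
  set g : ℝ → ℝ := fun x => q.eval (Real.cos x) with hg
  have hgeval : ∀ x, g x = p.eval (Real.cos x) / (1 + δ) := by
    intro x; rw [hg]; simp [hq]; ring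
  have hg1 : ∀ x, |g x| ≤ 1 := by
    intro x
    rw [hgeval, abs_div, abs_of_pos (by linarith : (0:ℝ) < 1 + δ)]
    rw [div_le_one (by linarith)]
    exact hpb _ (Real.cos_mem_Icc x)
  have hgφ2 : ∀ x ∈ Set.Icc (-π) π, |g x - φ2 x| ≤ 2 * δ := by
    intro x hx
    have h1 : |p.eval (Real.cos x) - φ2 x| ≤ δ := by
      have := hp (Real.cos x) (Real.cos_mem_Icc x)
      rw [hψcos x hx] at this
      exact this.le
    have h2 : |g x - p.eval (Real.cos x)| ≤ δ := by
      rw [hgeval]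
      have hP := hpb (Real.cos x) (Real.cos_mem_Icc x)
      have e : p.eval (Real.cos x)/(1+δ) - p.eval (Real.cos x)
          = -(p.eval (Real.cos x)) * (δ/(1+δ)) := by
        have hne : (1+δ) ≠ 0 := by positivity
        field_simp
        ring
      rw [e, abs_mul, abs_neg, abs_of_nonneg (by positivity : (0:ℝ) ≤ δ/(1+δ))]
      calc |p.eval (Real.cos x)| * (δ/(1+δ)) ≤ (1+δ) * (δ/(1+δ)) :=
            mul_le_mul_of_nonneg_right hP (by positivity)
        _ = δ := by
            have hne : (1+δ) ≠ 0 := by positivity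
            field_simp
    calc |g x - φ2 x| ≤ |g x - p.eval (Real.cos x)| + |p.eval (Real.cos x) - φ2 x| := by
          have := abs_sub_le (g x) (p.eval (Real.cos x)) (φ2 x); linarith
      _ ≤ δ + δ := add_le_add h2 h1
      _ = 2 * δ := by ring
  obtain ⟨N, a, hNa⟩ := poly_cp q
  refine ⟨N, a, fun x => by rw [← hNa x]; exact hg1 x, ?_⟩
  have hgcont : Continuous g := by
    rw [hg]; exact q.continuous.comp Real.continuous_cos
  have hgaesm : AEStronglyMeasurable g μ := hgcont.aestronglyMeasurable
  have hrw : (fun x : ℝ =>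
      2 * (a 0 + ∑ n ∈ Finset.Icc 1 N, a n * Real.cos (n * x)) ^ 2 - 1 - f x)
      = fun x => 2 * g x ^ 2 - 1 - f x := funext fun x => by rw [← hNa x]
  rw [hrw]
  have step1 : eLpNorm (fun x => 2 * g x ^ 2 - 1 - f x) 2 μ
      ≤ eLpNorm (fun x => (4:ℝ) * (g x - h x)) 2 μ := by
    refine eLpNorm_mono_ae ?_
    filter_upwards [hae_mem] with x hx
    have hfx := hhf x hx
    obtain ⟨hh0, hh1⟩ := hh01 x hx
    have hgx := hg1 x
    rw [Real.norm_eq_abs, Real.norm_eq_abs]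
    have e : 2 * g x ^ 2 - 1 - f x = 2 * (g x - h x) * (g x + h x) := by
      rw [← hfx]; ring
    rw [e]
    have h4 : |g x + h x| ≤ 2 := by
      rw [abs_le] at hgx ⊢
      constructor <;> linarith [hgx.1, hgx.2]
    calc |2 * (g x - h x) * (g x + h x)|
        = 2 * |g x - h x| * |g x + h x| := by
          rw [abs_mul, abs_mul, abs_two]
      _ ≤ 2 * |g x - h x| * 2 := by
          exact mul_le_mul_of_nonneg_left h4 (by positivity)
      _ = |(4:ℝ)| * |g x - h x| := by rw [abs_of_nonneg (by norm_num : (0:ℝ) ≤ 4)]; ring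
      _ = |4 * (g x - h x)| := (abs_mul _ _).symm
  have step2 : eLpNorm (fun x => (4:ℝ) * (g x - h x)) 2 μ
      = (4:ℝ≥0∞) * eLpNorm (fun x => g x - h x) 2 μ := by
    rw [show (fun x => (4:ℝ) * (g x - h x)) = (4:ℝ) • (fun x => g x - h x) from rfl,
      eLpNorm_const_smul]
    congr 1
    rw [Real.enorm_eq_ofReal_abs]
    norm_num
  have step3 : eLpNorm (fun x => g x - h x) 2 μ
      ≤ eLpNorm (fun x => g x - φ2 x) 2 μ + eLpNorm (fun x => φ2 x - h x) 2 μ := by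
    have e : (fun x => g x - h x) = (fun x => g x - φ2 x) + (fun x => φ2 x - h x) := by
      funext x; simp only [Pi.add_apply]; ring
    rw [e]
    exact eLpNorm_add_le (hgaesm.sub hφ2_cont.aestronglyMeasurable)
      (hφ2_cont.aestronglyMeasurable.sub hhmeas) one_le_two
  have step4 : eLpNorm (fun x => g x - φ2 x) 2 μ ≤ ENNReal.ofReal (ε/16) := by
    have hb : ∀ᵐ x ∂μ, ‖g x - φ2 x‖ ≤ 2 * δ := by
      filter_upwards [hae_mem] with x hx
      rw [Real.norm_eq_abs]; exact hgφ2 x hx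
    refine (eLpNorm_le_of_ae_bound hb).trans ?_
    have h1 : μ Set.univ ^ (2:ℝ≥0∞).toReal⁻¹ ≤ ENNReal.ofReal 3 := by
      rw [hμuniv, show (2:ℝ≥0∞).toReal⁻¹ = (2⁻¹ : ℝ) by norm_num]
      calc ENNReal.ofReal (2*π) ^ (2⁻¹:ℝ) ≤ ENNReal.ofReal 9 ^ (2⁻¹:ℝ) := by
            exact ENNReal.rpow_le_rpow (ENNReal.ofReal_le_ofReal
              (by nlinarith [Real.pi_le_four])) (by norm_num)
        _ = ENNReal.ofReal ((9:ℝ) ^ (2⁻¹:ℝ)) := ENNReal.ofReal_rpow_of_pos (by norm_num)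
        _ = ENNReal.ofReal 3 := by
            congr 1
            rw [show (2⁻¹:ℝ) = 1/2 by norm_num, ← Real.sqrt_eq_rpow,
              show (9:ℝ) = 3^2 by norm_num, Real.sqrt_sq (by norm_num)]
    calc μ Set.univ ^ (2:ℝ≥0∞).toReal⁻¹ * ENNReal.ofReal (2*δ)
        ≤ ENNReal.ofReal 3 * ENNReal.ofReal (2*δ) := mul_le_mul_left h1 _
      _ = ENNReal.ofReal (3*(2*δ)) := (ENNReal.ofReal_mul (by norm_num)).symm
      _ = ENNReal.ofReal (ε/16) := by rw [hδ]; congr 1; ring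
  have step5 : eLpNorm (fun x => φ2 x - h x) 2 μ ≤ ENNReal.ofReal (ε/16) := by
    have e : (fun x => φ2 x - h x) = φ2 - h := rfl
    rw [e, eLpNorm_sub_comm]
    exact hφ2_close
  calc eLpNorm (fun x => 2 * g x ^ 2 - 1 - f x) 2 μ
      ≤ (4:ℝ≥0∞) * eLpNorm (fun x => g x - h x) 2 μ := by rw [← step2]; exact step1
    _ ≤ (4:ℝ≥0∞) * (ENNReal.ofReal (ε/16) + ENNReal.ofReal (ε/16)) := by
        exact mul_le_mul_right (step3.trans (add_le_add step4 step5)) _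
    _ = ENNReal.ofReal (ε/2) := by
        rw [← ENNReal.ofReal_add (by linarith) (by linarith),
          show (4:ℝ≥0∞) = ENNReal.ofReal 4 by norm_num,
          ← ENNReal.ofReal_mul (by norm_num)]
        congr 1; ring
    _ ≤ ENNReal.ofReal ε := ENNReal.ofReal_le_ofReal (by linarith)
end

section
/- Let f : [-π, π] → [-1, 1] be square-integrable and ε > 0. Then there exist N ∈ ℕ and complex coefficients c_{-N}, ..., c_N such that the trigonometric polynomial g(x) = Σ_{n=-N}^{N} c_n e^{inx} satisfies |g(x)| ≤ 1 for all x and ‖ 2|g|² − 1 − f ‖_{L²([-π,π])} ≤ ε. -/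
open MeasureTheory Real Complex
open scoped ENNReal NNReal

private lemma clamp01_lip (a b : ℝ) (hb0 : 0 ≤ b) (hb1 : b ≤ 1) :
    |max 0 (min 1 a) - b| ≤ |a - b| := by
  rcases le_total a 0 with h | h
  · rw [min_eq_right (h.trans zero_le_one), max_eq_left h]
    rw [abs_of_nonpos (by linarith), abs_of_nonpos (by linarith)]; linarith
  · rcases le_total 1 a with h1 | h1
    · rw [min_eq_left h1, max_eq_right zero_le_one]
      rw [_root_.abs_of_nonneg (by linarith), _root_.abs_of_nonneg (by linarith)]; linarith
    · rw [min_eq_right h1, max_eq_right h]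

set_option maxHeartbeats 2000000 in
/-- for any square-integrable `f : [-π, π] → [-1, 1]` and `ε > 0`, there is a
trigonometric polynomial `g(x) = Σ_{n=-N}^N c_n e^{inx}` with `|g| ≤ 1` such that
`‖2|g|² − 1 − f‖_{L²([-π,π])} ≤ ε`. -/
theorem stmt13 (f : ℝ → ℝ) (ε : ℝ) (hε : 0 < ε)
    (hmap : ∀ x ∈ Set.Icc (-π) π, f x ∈ Set.Icc (-1 : ℝ) 1)
    (hL2 : MemLp f 2 (volume.restrict (Set.Icc (-π) π))) :
    ∃ (N : ℕ) (c : ℤ → ℂ),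
      (∀ x : ℝ, ‖∑ n ∈ Finset.Icc (-(N : ℤ)) (N : ℤ),
          c n * Complex.exp (Complex.I * (n : ℂ) * (x : ℂ))‖ ≤ 1) ∧
      eLpNorm
          (fun x : ℝ =>
            2 * ‖∑ n ∈ Finset.Icc (-(N : ℤ)) (N : ℤ),
                c n * Complex.exp (Complex.I * (n : ℂ) * (x : ℂ))‖ ^ 2 - 1 - f x)
          2 (volume.restrict (Set.Icc (-π) π)) ≤ ENNReal.ofReal ε := by
  haveI : Fact (0 < 2*π) := ⟨by positivity⟩
  set μ := volume.restrict (Set.Icc (-π) π) with hμ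
  haveI : IsFiniteMeasure μ := by
    constructor
    rw [hμ, Measure.restrict_apply_univ, Real.volume_Icc]
    exact ENNReal.ofReal_lt_top
  -- the target function h = sqrt((1+f)/2), clamped for global bounds
  set h : ℝ → ℝ := fun x => Real.sqrt ((1 + max (-1) (min 1 (f x))) / 2) with hh_def
  have hcl : ∀ x, (-1:ℝ) ≤ max (-1) (min 1 (f x)) ∧ max (-1) (min 1 (f x)) ≤ 1 :=
    fun x => ⟨le_max_left _ _, max_le (by norm_num) (min_le_left _ _)⟩
  have hh0 : ∀ x, 0 ≤ h x := fun x => Real.sqrt_nonneg _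
  have hh1 : ∀ x, h x ≤ 1 := by
    intro x
    rw [hh_def]
    calc Real.sqrt ((1 + max (-1) (min 1 (f x))) / 2) ≤ Real.sqrt 1 :=
          Real.sqrt_le_sqrt (by linarith [(hcl x).2])
      _ = 1 := Real.sqrt_one
  have hhsq : ∀ x ∈ Set.Icc (-π) π, 2 * h x ^ 2 - 1 = f x := by
    intro x hx
    have hfx := hmap x hx
    have h1 : max (-1) (min 1 (f x)) = f x := by
      rw [min_eq_right hfx.2, max_eq_right hfx.1]
    rw [hh_def]
    simp only [h1]
    rw [Real.sq_sqrt (by linarith [hfx.1])]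
    ring
  have hhmeas : AEStronglyMeasurable h μ := by
    have : Continuous fun t : ℝ => Real.sqrt ((1 + max (-1) (min 1 t)) / 2) := by
      fun_prop
    exact this.comp_aestronglyMeasurable hL2.aestronglyMeasurable
  have hhmem : MemLp h 2 μ :=
    MemLp.of_bound hhmeas 1 (Filter.Eventually.of_forall fun x => by
      rw [Real.norm_eq_abs, _root_.abs_of_nonneg (hh0 x)]; exact hh1 x)
  -- step 1 : continuous compactly supported approximation g₀ of h in L²(μ)
  set H : ℝ → ℝ := (Set.Icc (-π) π).indicator h with hH_def
  have hHmem : MemLp H 2 volume := (memLp_indicator_iff_restrict measurableSet_Icc).mpr hhmem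
  obtain ⟨g₀, -, hg₀close, g₀cont, -⟩ :=
    hHmem.exists_hasCompactSupport_eLpNorm_sub_le (by norm_num)
      (ε := ENNReal.ofReal (ε/12)) (ne_of_gt (ENNReal.ofReal_pos.mpr (by positivity)))
  -- step 2 : clamp to [0,1]
  set g₁ : ℝ → ℝ := fun x => max 0 (min 1 (g₀ x)) with hg₁_def
  have g₁cont : Continuous g₁ := by fun_prop
  have hg₁0 : ∀ x, 0 ≤ g₁ x := fun x => le_max_left _ _
  have hg₁1 : ∀ x, g₁ x ≤ 1 := fun x => max_le zero_le_one (min_le_left _ _)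
  have hg₁h : ∀ x, |g₁ x - h x| ≤ |g₀ x - h x| := fun x => clamp01_lip _ _ (hh0 x) (hh1 x)
  -- step 3 : cutoff near ±π
  set δ : ℝ := (ε/12)^2/2 with hδ_def
  have hδ : 0 < δ := by positivity
  set w : ℝ → ℝ := fun x => max 0 (min 1 ((π - |x|)/δ)) with hw_def
  have wcont : Continuous w := by fun_prop
  have hw0 : ∀ x, 0 ≤ w x := fun x => le_max_left _ _
  have hw1 : ∀ x, w x ≤ 1 := fun x => max_le zero_le_one (min_le_left _ _)
  have hwπ : w π = 0 ∧ w (-π) = 0 := by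
    constructor <;>
    · rw [hw_def]
      simp only [abs_neg, _root_.abs_of_nonneg Real.pi_pos.le, sub_self, zero_div]
      norm_num
  have hwone : ∀ x, |x| ≤ π - δ → w x = 1 := by
    intro x hx
    rw [hw_def]
    have : (1:ℝ) ≤ (π - |x|)/δ := by
      rw [le_div_iff₀ hδ]; linarith
    simp only []
    rw [min_eq_left this, max_eq_right zero_le_one]
  set g₂ : ℝ → ℝ := fun x => g₁ x * w x with hg₂_def
  have g₂cont : Continuous g₂ := g₁cont.mul wcont
  have hg₂0 : ∀ x, 0 ≤ g₂ x := fun x => mul_nonneg (hg₁0 x) (hw0 x)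
  have hg₂1 : ∀ x, g₂ x ≤ 1 := fun x => mul_le_one₀ (hg₁1 x) (hw0 x) (hw1 x)
  have hg₂end : g₂ (-π) = g₂ π := by rw [hg₂_def]; simp only [hwπ.1, hwπ.2, mul_zero]
  -- step 4 : periodization
  have hper : (fun x : ℝ => (g₂ x : ℂ)) (-π) = (fun x : ℝ => (g₂ x : ℂ)) (-π + 2*π) := by
    simp only []
    rw [show -π + 2*π = π by ring, hg₂end]
  have hGcont : Continuous (AddCircle.liftIco (2*π) (-π) (fun x : ℝ => (g₂ x : ℂ))) :=
    AddCircle.liftIco_continuous hper ((Complex.continuous_ofReal.comp g₂cont).continuousOn)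
  set G : C(AddCircle (2*π), ℂ) := ⟨_, hGcont⟩ with hG_def
  have hGnorm : ‖G‖ ≤ 1 := by
    rw [ContinuousMap.norm_le _ zero_le_one]
    intro z
    simp only [hG_def, ContinuousMap.coe_mk]
    show ‖(fun x : ℝ => (g₂ x : ℂ)) _‖ ≤ 1
    rw [Complex.norm_real, Real.norm_eq_abs, _root_.abs_of_nonneg (hg₂0 _)]
    exact hg₂1 _
  have hGcoe : ∀ x ∈ Set.Icc (-π) π, G (x : AddCircle (2*π)) = (g₂ x : ℂ) := by
    intro x hx
    simp only [hG_def, ContinuousMap.coe_mk]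
    rcases lt_or_eq_of_le hx.2 with hlt | rfl
    · exact AddCircle.liftIco_coe_apply ⟨hx.1, by rw [show -π + 2*π = π by ring]; exact hlt⟩
    · have hππ : ((π:ℝ) : AddCircle (2*π)) = ((-π : ℝ) : AddCircle (2*π)) := by
        rw [← AddCircle.coe_add_period (2*π) (-π)]
        congr 1
        ring
      rw [hππ]
      rw [AddCircle.liftIco_coe_apply ⟨le_refl _,
        by rw [show -π + 2*π = π by ring]; linarith [Real.pi_pos]⟩]
      rw [hg₂end]
  -- step 5 : uniform approximation by a trigonometric polynomial
  set η : ℝ := ε/144 with hη_def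
  have hηpos : 0 < η := by positivity
  have hGmem : (G : C(AddCircle (2*π), ℂ)) ∈
      closure ((Submodule.span ℂ (Set.range (@fourier (2*π)))) : Set C(AddCircle (2*π), ℂ)) := by
    rw [← Submodule.topologicalClosure_coe, span_fourier_closure_eq_top]
    trivial
  rw [Metric.mem_closure_iff] at hGmem
  obtain ⟨P, hPspan, hPdist⟩ := hGmem η hηpos
  have hPnorm : ‖P‖ ≤ 1 + η := by
    have h1 : ‖P‖ - ‖G‖ ≤ ‖P - G‖ := norm_sub_norm_le _ _
    have h2 : ‖P - G‖ = dist G P := by rw [dist_comm, dist_eq_norm]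
    linarith
  have hPGx : ∀ z : AddCircle (2*π), ‖P z - G z‖ ≤ η := by
    intro z
    calc ‖P z - G z‖ = ‖(P - G) z‖ := by rw [ContinuousMap.sub_apply]
      _ ≤ ‖P - G‖ := ContinuousMap.norm_coe_le_norm _ _
      _ ≤ η := by rw [dist_comm, dist_eq_norm] at hPdist; exact hPdist.le
  have hPx : ∀ z : AddCircle (2*π), ‖P z‖ ≤ 1 + η :=
    fun z => (ContinuousMap.norm_coe_le_norm P z).trans hPnorm
  -- extract coefficients
  have hPspan' : P ∈ Submodule.span ℂ (Set.range (@fourier (2*π))) := hPspan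
  rw [Finsupp.mem_span_range_iff_exists_finsupp] at hPspan'
  obtain ⟨a, ha⟩ := hPspan'
  set N : ℕ := a.support.sup Int.natAbs with hN
  set c : ℤ → ℂ := fun n => a n / ((1 + η : ℝ) : ℂ) with hc_def
  set gN : ℝ → ℂ := fun x => ∑ n ∈ Finset.Icc (-(N:ℤ)) (N:ℤ),
      c n * Complex.exp (Complex.I * n * x) with hgN_def
  have hcη : ((1 + η : ℝ) : ℂ) ≠ 0 := by
    rw [Complex.ofReal_ne_zero]; positivity
  have hgNP : ∀ x : ℝ, gN x = P (x : AddCircle (2*π)) / ((1 + η : ℝ) : ℂ) := by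
    intro x
    have hsub : a.support ⊆ Finset.Icc (-(N:ℤ)) (N:ℤ) := by
      intro n hn
      have h1 : n.natAbs ≤ N := Finset.le_sup hn
      have h2 : |n| ≤ (N : ℤ) := by rw [Int.abs_eq_natAbs]; exact_mod_cast h1
      rw [Finset.mem_Icc]
      constructor <;> [linarith [neg_abs_le n]; linarith [le_abs_self n]]
    have hfour : ∀ (n : ℤ), (@fourier (2*π) n) (x : AddCircle (2*π))
        = Complex.exp (Complex.I * n * x) := by
      intro n
      rw [fourier_coe_apply]
      congr 1
      have hπ : (π:ℂ) ≠ 0 := Complex.ofReal_ne_zero.mpr Real.pi_ne_zero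
      field_simp; push_cast; ring
    rw [hgN_def]
    simp only [hc_def, div_mul_eq_mul_div, ← Finset.sum_div]
    congr 1
    calc ∑ n ∈ Finset.Icc (-(N:ℤ)) (N:ℤ), a n * Complex.exp (Complex.I * n * x)
        = ∑ n ∈ a.support, a n * Complex.exp (Complex.I * n * x) :=
          (Finset.sum_subset hsub (fun n _ hn => by
            simp [Finsupp.notMem_support_iff.mp hn])).symm
      _ = (a.sum fun i r => r • fourier i) (x : AddCircle (2*π)) := by
          rw [Finsupp.sum]
          simp only [ContinuousMap.coe_sum, Finset.sum_apply, ContinuousMap.coe_smul,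
            Pi.smul_apply, smul_eq_mul]
          exact Finset.sum_congr rfl fun n _ => by rw [hfour]
      _ = P (x : AddCircle (2*π)) := by rw [ha]
  -- the sup bound
  have habs1 : ∀ x : ℝ, ‖gN x‖ ≤ 1 := by
    intro x
    rw [hgNP x]
    rw [norm_div]
    rw [Complex.norm_real, Real.norm_eq_abs, _root_.abs_of_nonneg (by positivity : (0:ℝ) ≤ 1 + η)]
    rw [div_le_one (by positivity)]
    exact hPx _
  -- pointwise closeness of gN to g₂ on [-π, π]
  have hgNg₂ : ∀ x ∈ Set.Icc (-π) π, ‖gN x - (g₂ x : ℂ)‖ ≤ 2*η := by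
    intro x hx
    rw [hgNP x, ← hGcoe x hx]
    have key : P (x : AddCircle (2*π)) / ((1 + η : ℝ) : ℂ) - G (x : AddCircle (2*π))
        = P (x : AddCircle (2*π)) * (((1:ℂ) - ((1+η:ℝ):ℂ)) / ((1+η:ℝ):ℂ))
          + (P (x : AddCircle (2*π)) - G (x : AddCircle (2*π))) := by
      have e0 : ((1:ℂ) - ((1+η:ℝ):ℂ))/((1+η:ℝ):ℂ) = 1/((1+η:ℝ):ℂ) - 1 := by
        rw [sub_div, div_self hcη]
      rw [e0, mul_sub, mul_one_div, mul_one]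
      ring
    rw [key]
    calc ‖_ + _‖ ≤ ‖P (x : AddCircle (2*π)) * (((1:ℂ) - ((1+η:ℝ):ℂ)) / ((1+η:ℝ):ℂ))‖
        + ‖P (x : AddCircle (2*π)) - G (x : AddCircle (2*π))‖ := norm_add_le _ _
      _ ≤ (1+η) * (η / (1+η)) + η := by
          gcongr
          · rw [norm_mul]
            have h2 : ‖((1:ℂ) - ((1+η:ℝ):ℂ)) / ((1+η:ℝ):ℂ)‖ = η / (1+η) := by
              rw [norm_div]
              congr 1
              · rw [show ((1:ℂ) - ((1+η:ℝ):ℂ)) = ((-η : ℝ) : ℂ) by push_cast; ring]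
                rw [Complex.norm_real, Real.norm_eq_abs, abs_neg,
                  _root_.abs_of_nonneg hηpos.le]
              · rw [Complex.norm_real, Real.norm_eq_abs,
                  _root_.abs_of_nonneg (by positivity : (0:ℝ) ≤ 1+η)]
            rw [h2]
            exact mul_le_mul_of_nonneg_right (hPx _) (by positivity)
          · exact hPGx _
      _ ≤ η + η := by
          gcongr
          rw [mul_div_assoc']
          rw [mul_comm, mul_div_assoc]
          nlinarith [div_self (by positivity : (1+η:ℝ) ≠ 0)]
      _ = 2*η := by ring
  refine ⟨N, c, habs1, ?_⟩
  show eLpNorm (fun x : ℝ => 2 * ‖gN x‖ ^ 2 - 1 - f x) 2 μ ≤ ENNReal.ofReal ε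
  -- the three error terms
  set F1 : ℝ → ℂ := fun x => gN x - (g₂ x : ℂ) with hF1_def
  set F2 : ℝ → ℂ := fun x => (g₂ x : ℂ) - (g₁ x : ℂ) with hF2_def
  set F3 : ℝ → ℂ := fun x => (g₁ x : ℂ) - (h x : ℂ) with hF3_def
  have gNcont : Continuous gN := by
    rw [hgN_def]
    exact continuous_finset_sum _ fun n _ =>
      continuous_const.mul (Complex.continuous_exp.comp (by fun_prop))
  have hF1m : AEStronglyMeasurable F1 μ :=
    (gNcont.sub (Complex.continuous_ofReal.comp g₂cont)).aestronglyMeasurable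
  have hF2m : AEStronglyMeasurable F2 μ :=
    ((Complex.continuous_ofReal.comp g₂cont).sub
      (Complex.continuous_ofReal.comp g₁cont)).aestronglyMeasurable
  have hF3m : AEStronglyMeasurable F3 μ :=
    ((Complex.continuous_ofReal.comp g₁cont).aestronglyMeasurable).sub
      (Complex.continuous_ofReal.comp_aestronglyMeasurable hhmeas)
  -- bound on F1
  have e1 : eLpNorm F1 2 μ ≤ ENNReal.ofReal (ε/24) := by
    have hb : ∀ᵐ x ∂μ, ‖F1 x‖ ≤ 2*η :=
      (ae_restrict_iff' measurableSet_Icc).mpr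
        (Filter.Eventually.of_forall fun x hx => hgNg₂ x hx)
    calc eLpNorm F1 2 μ ≤ μ Set.univ ^ (2:ℝ≥0∞).toReal⁻¹ * ENNReal.ofReal (2*η) :=
          eLpNorm_le_of_ae_bound hb
      _ ≤ ENNReal.ofReal 9 ^ (2:ℝ≥0∞).toReal⁻¹ * ENNReal.ofReal (2*η) := by
          apply mul_le_mul_left
          apply ENNReal.rpow_le_rpow _ (inv_nonneg.mpr ENNReal.toReal_nonneg)
          rw [hμ, Measure.restrict_apply_univ, Real.volume_Icc]
          exact ENNReal.ofReal_le_ofReal (by nlinarith [Real.pi_le_four])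
      _ = ENNReal.ofReal 3 * ENNReal.ofReal (2*η) := by
          congr 1
          rw [ENNReal.ofReal_rpow_of_nonneg (by norm_num) (inv_nonneg.mpr ENNReal.toReal_nonneg)]
          congr 1
          rw [show ((2:ℝ≥0∞).toReal)⁻¹ = (1/2:ℝ) by simp]
          rw [← Real.sqrt_eq_rpow, show (9:ℝ) = 3^2 by norm_num, Real.sqrt_sq (by norm_num)]
      _ = ENNReal.ofReal (6*η) := by
          rw [← ENNReal.ofReal_mul (by norm_num)]
          congr 1
          ring
      _ = ENNReal.ofReal (ε/24) := by rw [hη_def]; congr 1; ring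
  -- bound on F2
  have e2 : eLpNorm F2 2 μ ≤ ENNReal.ofReal (ε/12) := by
    set S : Set ℝ := Set.Icc (-π) π \ Set.Ioo (-π+δ) (π-δ) with hS_def
    have hSm : MeasurableSet S := measurableSet_Icc.diff measurableSet_Ioo
    have hb : ∀ᵐ x ∂μ, ‖F2 x‖ ≤ ‖S.indicator (fun _ => (1:ℝ)) x‖ :=
      (ae_restrict_iff' measurableSet_Icc).mpr (Filter.Eventually.of_forall fun x hx => by
        by_cases hxS : x ∈ Set.Ioo (-π+δ) (π-δ)
        · have hw : w x = 1 := hwone x (abs_le.mpr ⟨by linarith [hxS.1], by linarith [hxS.2]⟩)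
          have hzz : F2 x = 0 := by
            rw [hF2_def]
            simp only [hg₂_def, hw, mul_one, sub_self]
          rw [hzz, norm_zero]
          positivity
        · have hxS' : x ∈ S := ⟨hx, hxS⟩
          rw [Set.indicator_of_mem hxS']
          rw [hF2_def]
          simp only []
          rw [show (g₂ x : ℂ) - (g₁ x : ℂ) = ((g₂ x - g₁ x : ℝ) : ℂ) by push_cast; ring]
          rw [Complex.norm_real, Real.norm_eq_abs, Real.norm_eq_abs, abs_one]
          exact abs_le.mpr ⟨by linarith [hg₂0 x, hg₁1 x], by linarith [hg₂1 x, hg₁0 x]⟩)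
    calc eLpNorm F2 2 μ ≤ eLpNorm (S.indicator fun _ => (1:ℝ)) 2 μ := eLpNorm_mono_ae hb
      _ = ‖(1:ℝ)‖₊ * μ S ^ (1/(2:ℝ≥0∞).toReal) :=
          eLpNorm_indicator_const hSm (by norm_num) (by norm_num)
      _ ≤ 1 * ENNReal.ofReal (2*δ) ^ (1/(2:ℝ≥0∞).toReal) := by
          apply mul_le_mul'
          · simp
          apply ENNReal.rpow_le_rpow _ (div_nonneg zero_le_one ENNReal.toReal_nonneg)
          · -- μ S ≤ ofReal (2δ)
            calc μ S = volume (S ∩ Set.Icc (-π) π) := by rw [hμ, Measure.restrict_apply hSm]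
              _ ≤ volume S := measure_mono Set.inter_subset_left
              _ ≤ volume (Set.Icc (-π) (-π+δ) ∪ Set.Icc (π-δ) π) := by
                  refine measure_mono ?_
                  rintro x ⟨hx1, hx2⟩
                  simp only [Set.mem_Ioo, not_and_or, not_lt] at hx2
                  rcases hx2 with h' | h'
                  · exact Or.inl ⟨hx1.1, h'⟩
                  · exact Or.inr ⟨h', hx1.2⟩
              _ ≤ volume (Set.Icc (-π) (-π+δ)) + volume (Set.Icc (π-δ) π) :=
                  measure_union_le _ _
              _ = ENNReal.ofReal (2*δ) := by
                  rw [Real.volume_Icc, Real.volume_Icc, ← ENNReal.ofReal_add (by linarith) (by linarith)]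
                  congr 1
                  ring
      _ = ENNReal.ofReal (ε/12) := by
          rw [one_mul, ENNReal.ofReal_rpow_of_nonneg (by positivity)
            (div_nonneg zero_le_one ENNReal.toReal_nonneg)]
          congr 1
          rw [show (1/(2:ℝ≥0∞).toReal) = (1/2:ℝ) by simp]
          rw [← Real.sqrt_eq_rpow, hδ_def, show 2*((ε/12)^2/2) = (ε/12)^2 by ring,
            Real.sqrt_sq (by positivity)]
  -- bound on F3
  have e3 : eLpNorm F3 2 μ ≤ ENNReal.ofReal (ε/12) := by
    calc eLpNorm F3 2 μ ≤ eLpNorm (fun x => H x - g₀ x) 2 μ := by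
          refine eLpNorm_mono_ae ?_
          refine (ae_restrict_iff' measurableSet_Icc).mpr (Filter.Eventually.of_forall fun x hx => ?_)
          have hHx : H x = h x := Set.indicator_of_mem hx h
          rw [hF3_def]
          simp only []
          rw [show (g₁ x : ℂ) - (h x : ℂ) = ((g₁ x - h x : ℝ) : ℂ) by push_cast; ring]
          rw [Complex.norm_real, Real.norm_eq_abs, Real.norm_eq_abs, hHx]
          exact (hg₁h x).trans (le_of_eq (abs_sub_comm _ _))
      _ ≤ eLpNorm (fun x => H x - g₀ x) 2 volume := eLpNorm_mono_measure _ Measure.restrict_le_self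
      _ = eLpNorm (H - g₀) 2 volume := rfl
      _ ≤ ENNReal.ofReal (ε/12) := hg₀close
  -- combine
  have hF0 : (fun x => gN x - ((h x : ℝ) : ℂ)) = F1 + F2 + F3 := by
    funext x
    simp only [hF1_def, hF2_def, hF3_def, Pi.add_apply]
    ring
  have e0 : eLpNorm (fun x => gN x - ((h x : ℝ) : ℂ)) 2 μ ≤
      ENNReal.ofReal (ε/24) + ENNReal.ofReal (ε/12) + ENNReal.ofReal (ε/12) := by
    rw [hF0]
    calc eLpNorm (F1 + F2 + F3) 2 μ ≤ eLpNorm (F1 + F2) 2 μ + eLpNorm F3 2 μ :=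
          eLpNorm_add_le (hF1m.add hF2m) hF3m one_le_two
      _ ≤ (eLpNorm F1 2 μ + eLpNorm F2 2 μ) + eLpNorm F3 2 μ := by
          gcongr
          exact eLpNorm_add_le hF1m hF2m one_le_two
      _ ≤ ENNReal.ofReal (ε/24) + ENNReal.ofReal (ε/12) + ENNReal.ofReal (ε/12) := by
          gcongr
  -- pointwise bound by 4 |gN - h|
  have hpt : ∀ᵐ x ∂μ, ‖2 * ‖gN x‖ ^ 2 - 1 - f x‖ ≤
      ‖((4:ℂ) • fun y => gN y - ((h y : ℝ) : ℂ)) x‖ := by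
    refine (ae_restrict_iff' measurableSet_Icc).mpr (Filter.Eventually.of_forall fun x hx => ?_)
    have hfx : f x = 2 * h x ^ 2 - 1 := (hhsq x hx).symm
    have habsd : |‖gN x‖ - h x| ≤ ‖gN x - ((h x : ℝ) : ℂ)‖ := by
      have := abs_norm_sub_norm_le (gN x) ((h x : ℝ) : ℂ)
      rwa [Complex.norm_real, Real.norm_eq_abs, _root_.abs_of_nonneg (hh0 x)] at this
    have hRHS : ‖((4:ℂ) • fun y => gN y - ((h y : ℝ) : ℂ)) x‖
        = 4 * ‖gN x - ((h x : ℝ) : ℂ)‖ := by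
      rw [Pi.smul_apply, smul_eq_mul, norm_mul]
      norm_num
    rw [hRHS, Real.norm_eq_abs, hfx]
    rw [show 2 * ‖gN x‖ ^ 2 - 1 - (2 * h x ^ 2 - 1)
        = (2 * (‖gN x‖ + h x)) * (‖gN x‖ - h x) by ring]
    rw [abs_mul, _root_.abs_of_nonneg (by positivity : (0:ℝ) ≤ 2 * (‖gN x‖ + h x))]
    apply mul_le_mul _ habsd (abs_nonneg _) (by norm_num)
    linarith [habs1 x, hh1 x]
  -- final estimate
  calc eLpNorm (fun x : ℝ => 2 * ‖gN x‖ ^ 2 - 1 - f x) 2 μ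
      ≤ eLpNorm ((4:ℂ) • fun y => gN y - ((h y : ℝ) : ℂ)) 2 μ := eLpNorm_mono_ae hpt
    _ = ‖(4:ℂ)‖ₑ * eLpNorm (fun y => gN y - ((h y : ℝ) : ℂ)) 2 μ := eLpNorm_const_smul _ _ _ _
    _ ≤ (4:ℝ≥0∞) * (ENNReal.ofReal (ε/24) + ENNReal.ofReal (ε/12) + ENNReal.ofReal (ε/12)) := by
        rw [show (‖(4:ℂ)‖ₑ) = (4:ℝ≥0∞) by rw [← ofReal_norm, Complex.norm_ofNat, ENNReal.ofReal_ofNat]]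
        exact mul_le_mul_right e0 _
    _ = ENNReal.ofReal (4 * (ε/24 + ε/12 + ε/12)) := by
        rw [← ENNReal.ofReal_add (by positivity) (by positivity),
          ← ENNReal.ofReal_add (by positivity) (by positivity),
          show (4:ℝ≥0∞) = ENNReal.ofReal 4 by simp [ENNReal.ofReal_ofNat],
          ← ENNReal.ofReal_mul (by norm_num)]
    _ ≤ ENNReal.ofReal ε := ENNReal.ofReal_le_ofReal (by linarith)
end
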